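/- Every Dynamic Oblivious Equilibrium has the Asymptotic Markov Equilibrium property: if ν is a DOE of the continuum game, then for every initial exogenous state s₀ ∈ 𝒮, every initial consumer type x₀ ∈ 𝒳₀, and every sequence of history-dependent strategies {κⁿ}, one has limsup_{n→∞} ( Vⁿ_{i,0}(x₀, s₀ | κⁿ, ν) − Vⁿ_{i,0}(x₀, s₀ | ν, ν) ) ≤ 0, i.e., asymptotically no consumer can gain by deviating from the DOE strategy when all other consumers use it. -/

import Mathlib

/-!
Dynamic pricing model of Tsitsiklis and Xu, "Pricing of Fluctuations in
Electricity Markets".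

* `S` : finite exogenous state space, evolving as a Markov chain with kernel `K`;
* `X0` : finite set of consumer types, with type distribution `eta s0` given the
  initial exogenous state `s0`;
* actions lie in `[0, B]`, internal states in `[0, Zbd]`, updated by `r`;
* `U t x z s a` : stage utility; `Cc`, `Hc0`, `Hc` : continuum primary and
  ancillary cost functions, with (partial) derivatives `dC`, `dH0`, `dH1`
  (w.r.t. the first demand argument) and `dH2` (w.r.t. the second).
In the `n`-consumer model the costs scale as `Cⁿ(A,s) = n * Cc (A/n) s` etc., so
the `n`-consumer prices are the continuum marginal costs evaluated at the
per-capita demand `A / n`.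
-/

noncomputable section

structure ElecModel (S : Type*) (X0 : Type*) [Fintype S] [DecidableEq S] [Fintype X0] where
  T : ℕ
  B : ℝ
  B_pos : 0 < B
  Zbd : ℝ
  K : S → S → ℝ
  K_nonneg : ∀ s s', 0 ≤ K s s'
  K_sum : ∀ s, ∑ s' : S, K s s' = 1
  eta : S → X0 → ℝ
  eta_nonneg : ∀ s x, 0 ≤ eta s x
  eta_sum : ∀ s, ∑ x : X0, eta s x = 1
  r : X0 → ℝ → ℝ → S → ℝ
  U : ℕ → X0 → ℝ → S → ℝ → ℝ
  Cc : ℝ → S → ℝ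
  Hc0 : ℝ → S → ℝ
  Hc : ℝ → ℝ → S → S → ℝ
  dC : ℝ → S → ℝ
  dH0 : ℝ → S → ℝ
  dH1 : ℝ → ℝ → S → S → ℝ
  dH2 : ℝ → ℝ → S → S → ℝ

namespace ElecModel

variable {S : Type*} {X0 : Type*} [Fintype S] [DecidableEq S] [Fintype X0] [DecidableEq X0]

/-- A dynamic oblivious strategy: the action depends only on the consumer's type and
the history of exogenous states up to the current stage. -/
structure OblStrategy (M : ElecModel S X0) where
  act : ℕ → X0 → (ℕ → S) → ℝ
  act_mem : ∀ t x h, act t x h ∈ Set.Icc (0 : ℝ) M.B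
  act_prefix : ∀ t x h h', (∀ τ ≤ t, h τ = h' τ) → act t x h = act t x h'

/-- A history-dependent strategy: the action depends on the consumer's augmented state
`(previous action, type, internal state)`, the history of exogenous states up to the
current stage, and the empirical distribution (as a multiset) of the other consumers'
augmented states. -/
structure HistStrategy (M : ElecModel S X0) where
  act : ℕ → ℝ × X0 × ℝ → (ℕ → S) → Multiset (ℝ × X0 × ℝ) → ℝ
  act_mem : ∀ t y h f, act t y h f ∈ Set.Icc (0 : ℝ) M.B
  act_prefix : ∀ t y h h' f, (∀ τ ≤ t, h τ = h' τ) → act t y h f = act t y h' f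

/-- Probability of the Markov chain of exogenous states following `h` on stages `0,…,T`,
starting from `s0`. -/
def histProb (M : ElecModel S X0) (s0 : S) (h : ℕ → S) : ℝ :=
  (if h 0 = s0 then (1 : ℝ) else 0) * ∏ t ∈ Finset.range M.T, M.K (h t) (h (t + 1))

def extendHist (M : ElecModel S X0) (g : Fin (M.T + 1) → S) : ℕ → S :=
  fun n => g ⟨min n M.T, Nat.lt_succ_of_le (min_le_right n M.T)⟩

/-- Expectation, over the Markov histories of exogenous states starting at `s0`,
of a function of the history. -/
def expectHist (M : ElecModel S X0) (s0 : S) (F : (ℕ → S) → ℝ) : ℝ :=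
  ∑ g : Fin (M.T + 1) → S, M.histProb s0 (M.extendHist g) * F (M.extendHist g)

/-- The internal state trajectory of a consumer of type `x` along history `h`
under the action sequence `a` : `z 0 = 0`, `z (t+1) = r x (z t) (a t) (h (t+1))`. -/
def zTraj (M : ElecModel S X0) (x : X0) (h : ℕ → S) (a : ℕ → ℝ) : ℕ → ℝ
  | 0 => 0
  | t + 1 => M.zTraj x h a t |> fun z => M.r x z (a t) (h (t + 1))

/-- Average (per-capita) demand in the continuum model under the oblivious strategy `ν`. -/
def avgDemand (M : ElecModel S X0) (ν : OblStrategy M) (s0 : S) (h : ℕ → S) (t : ℕ) : ℝ :=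
  ∑ x : X0, M.eta s0 x * ν.act t x h

/-- Continuum price `p̃_t`. -/
def pTil (M : ElecModel S X0) (ν : OblStrategy M) (s0 : S) (h : ℕ → S) (t : ℕ) : ℝ :=
  M.dC (M.avgDemand ν s0 h t) (h t)

/-- Continuum price `w̃_t`. -/
def wTil (M : ElecModel S X0) (ν : OblStrategy M) (s0 : S) (h : ℕ → S) : ℕ → ℝ
  | 0 => M.dH0 (M.avgDemand ν s0 h 0) (h 0)
  | t + 1 => M.dH2 (M.avgDemand ν s0 h t) (M.avgDemand ν s0 h (t + 1)) (h t) (h (t + 1))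

/-- Continuum price `q̃_t` (charged on the previous stage's demand). -/
def qTil (M : ElecModel S X0) (ν : OblStrategy M) (s0 : S) (h : ℕ → S) : ℕ → ℝ
  | 0 => 0
  | t + 1 => M.dH1 (M.avgDemand ν s0 h t) (M.avgDemand ν s0 h (t + 1)) (h t) (h (t + 1))

/-- Total oblivious stage value along a history: consumer of type `x` follows `νhat`,
prices are induced by `ν`. -/
def oblStageSum (M : ElecModel S X0) (νhat ν : OblStrategy M) (s0 : S) (x : X0)
    (h : ℕ → S) : ℝ :=
  ∑ t ∈ Finset.range (M.T + 1),
    (M.U t x (M.zTraj x h (fun τ => νhat.act τ x h) t) (h t) (νhat.act t x h)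
      - (M.pTil ν s0 h t + M.wTil ν s0 h t) * νhat.act t x h
      - M.qTil ν s0 h t * (if t = 0 then 0 else νhat.act (t - 1) x h))

/-- Oblivious value function `Ṽ_{i,0}(x₀, s₀ ∣ ν̂, ν)`. -/
def oblValue (M : ElecModel S X0) (νhat ν : OblStrategy M) (x0 : X0) (s0 : S) : ℝ :=
  M.expectHist s0 (fun h => M.oblStageSum νhat ν s0 x0 h)

/-- A Dynamic Oblivious Equilibrium. -/
def IsDOE (M : ElecModel S X0) (ν : OblStrategy M) : Prop :=
  ∀ (νhat : OblStrategy M) (x0 : X0) (s0 : S),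
    M.oblValue νhat ν x0 s0 ≤ M.oblValue ν ν x0 s0

/-- The previous action of a consumer following the oblivious strategy `ν` (zero at stage 0). -/
def prevActObl (M : ElecModel S X0) (ν : OblStrategy M) (x : X0) (h : ℕ → S) : ℕ → ℝ
  | 0 => 0
  | t + 1 => ν.act t x h

/-- The empirical distribution (multiset) of the augmented states of the `m` consumers
other than `i`, all following the oblivious strategy `ν`, with type profile `ω`. -/
def othersAug (M : ElecModel S X0) (m : ℕ) (ν : OblStrategy M) (ω : Fin m → X0)
    (h : ℕ → S) (t : ℕ) : Multiset (ℝ × X0 × ℝ) :=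
  (Finset.univ : Finset (Fin m)).val.map
    (fun j => (M.prevActObl ν (ω j) h t, ω j, M.zTraj (ω j) h (fun τ => ν.act τ (ω j) h) t))

/-- Consumer `i`'s trajectory `(action at t, internal state at t)` in the `(m+1)`-consumer
game when she plays the history-dependent strategy `κ` while the `m` other consumers
(with type profile `ω`) play the oblivious strategy `ν`. -/
def iTraj (M : ElecModel S X0) (m : ℕ) (κ : HistStrategy M) (ν : OblStrategy M)
    (x0 : X0) (ω : Fin m → X0) (h : ℕ → S) : ℕ → ℝ × ℝ
  | 0 => (κ.act 0 ((0 : ℝ), x0, (0 : ℝ)) h (M.othersAug m ν ω h 0), 0)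
  | t + 1 =>
      M.iTraj m κ ν x0 ω h t |> fun prev =>
        (M.r x0 prev.2 prev.1 (h (t + 1))) |> fun z' =>
          (κ.act (t + 1) (prev.1, x0, z') h (M.othersAug m ν ω h (t + 1)), z')

/-- Aggregate demand in the `(m+1)`-consumer game. -/
def aggDemandN (M : ElecModel S X0) (m : ℕ) (κ : HistStrategy M) (ν : OblStrategy M)
    (x0 : X0) (ω : Fin m → X0) (h : ℕ → S) (t : ℕ) : ℝ :=
  (M.iTraj m κ ν x0 ω h t).1 + ∑ j : Fin m, ν.act t (ω j) h

/-- `n`-consumer price `p_t = (Cⁿ)'(A_t, s_t) = C̃'(A_t/n, s_t)`, with `n = m+1`. -/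
def pN (M : ElecModel S X0) (m : ℕ) (κ : HistStrategy M) (ν : OblStrategy M)
    (x0 : X0) (ω : Fin m → X0) (h : ℕ → S) (t : ℕ) : ℝ :=
  M.dC (M.aggDemandN m κ ν x0 ω h t / ((m : ℝ) + 1)) (h t)

/-- `n`-consumer price `w_t`, with `n = m+1`. -/
def wN (M : ElecModel S X0) (m : ℕ) (κ : HistStrategy M) (ν : OblStrategy M)
    (x0 : X0) (ω : Fin m → X0) (h : ℕ → S) : ℕ → ℝ
  | 0 => M.dH0 (M.aggDemandN m κ ν x0 ω h 0 / ((m : ℝ) + 1)) (h 0)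
  | t + 1 =>
      M.dH2 (M.aggDemandN m κ ν x0 ω h t / ((m : ℝ) + 1))
        (M.aggDemandN m κ ν x0 ω h (t + 1) / ((m : ℝ) + 1)) (h t) (h (t + 1))

/-- `n`-consumer price `q_t` (charged on the previous stage's demand), with `n = m+1`. -/
def qN (M : ElecModel S X0) (m : ℕ) (κ : HistStrategy M) (ν : OblStrategy M)
    (x0 : X0) (ω : Fin m → X0) (h : ℕ → S) : ℕ → ℝ
  | 0 => 0
  | t + 1 =>
      M.dH1 (M.aggDemandN m κ ν x0 ω h t / ((m : ℝ) + 1))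
        (M.aggDemandN m κ ν x0 ω h (t + 1) / ((m : ℝ) + 1)) (h t) (h (t + 1))

/-- Consumer `i`'s total payoff along the history `h`. -/
def iPayoff (M : ElecModel S X0) (m : ℕ) (κ : HistStrategy M) (ν : OblStrategy M)
    (x0 : X0) (ω : Fin m → X0) (h : ℕ → S) : ℝ :=
  ∑ t ∈ Finset.range (M.T + 1),
    (M.U t x0 (M.iTraj m κ ν x0 ω h t).2 (h t) (M.iTraj m κ ν x0 ω h t).1
      - (M.pN m κ ν x0 ω h t + M.wN m κ ν x0 ω h t) * (M.iTraj m κ ν x0 ω h t).1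
      - M.qN m κ ν x0 ω h t * (if t = 0 then 0 else (M.iTraj m κ ν x0 ω h (t - 1)).1))

/-- Consumer `i`'s expected payoff `Vⁿ_{i,0}(x₀, s₀ ∣ κ, ν)` in the `(m+1)`-consumer game:
the other `m` consumers' types are drawn i.i.d. from `eta s0` and all of them use `ν`. -/
def Vn (M : ElecModel S X0) (m : ℕ) (κ : HistStrategy M) (ν : OblStrategy M)
    (x0 : X0) (s0 : S) : ℝ :=
  ∑ ω : Fin m → X0, (∏ j : Fin m, M.eta s0 (ω j)) *
    M.expectHist s0 (fun h => M.iPayoff m κ ν x0 ω h)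

/-- An oblivious strategy regarded as a history-dependent strategy. -/
def OblStrategy.toHist {M : ElecModel S X0} (ν : OblStrategy M) : HistStrategy M where
  act := fun t y h _ => ν.act t y.2.1 h
  act_mem := fun t y h _ => ν.act_mem t y.2.1 h
  act_prefix := fun t y h h' _ hp => ν.act_prefix t y.2.1 h h' hp

/-- Stage social welfare in the continuum model. -/
def contStageWelfare (M : ElecModel S X0) (ν : OblStrategy M) (s0 : S) (h : ℕ → S)
    (t : ℕ) : ℝ :=
  (∑ x : X0, M.eta s0 x *
      M.U t x (M.zTraj x h (fun τ => ν.act τ x h) t) (h t) (ν.act t x h))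
    - M.Cc (M.avgDemand ν s0 h t) (h t)
    - (if t = 0 then M.Hc0 (M.avgDemand ν s0 h 0) (h 0)
        else M.Hc (M.avgDemand ν s0 h (t - 1)) (M.avgDemand ν s0 h t) (h (t - 1)) (h t))

/-- Expected social welfare `W̃₀(s₀ ∣ ν)` in the continuum model. -/
def contWelfare (M : ElecModel S X0) (ν : OblStrategy M) (s0 : S) : ℝ :=
  M.expectHist s0 (fun h => ∑ t ∈ Finset.range (M.T + 1), M.contStageWelfare ν s0 h t)

/-- Joint trajectory `(action at t, internal state at t)` of the `n` consumers with type
profile `ω` when all of them use the history-dependent strategy `κ`. -/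
def jointTraj (M : ElecModel S X0) (n : ℕ) (κ : HistStrategy M) (ω : Fin n → X0)
    (h : ℕ → S) : ℕ → Fin n → ℝ × ℝ
  | 0 => fun i =>
      (κ.act 0 ((0 : ℝ), ω i, (0 : ℝ)) h
        (((Finset.univ : Finset (Fin n)).erase i).val.map fun j => ((0 : ℝ), ω j, (0 : ℝ))), 0)
  | t + 1 => fun i =>
      M.jointTraj n κ ω h t |> fun prev =>
        (fun j : Fin n => ((prev j).1, ω j, M.r (ω j) (prev j).2 (prev j).1 (h (t + 1))))
          |> fun aug =>
            (κ.act (t + 1) (aug i) h (((Finset.univ : Finset (Fin n)).erase i).val.map aug),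
              M.r (ω i) (prev i).2 (prev i).1 (h (t + 1)))

/-- Aggregate demand in the `n`-consumer game when everyone uses `κ`. -/
def aggDemandAll (M : ElecModel S X0) (n : ℕ) (κ : HistStrategy M) (ω : Fin n → X0)
    (h : ℕ → S) (t : ℕ) : ℝ :=
  ∑ i : Fin n, (M.jointTraj n κ ω h t i).1

/-- Realized total social welfare along the history `h` in the `n`-consumer game under the
symmetric strategy profile `(κ,…,κ)`; the `n`-consumer costs are `n * C̃(A/n)` etc. -/
def welfProfile (M : ElecModel S X0) (n : ℕ) (κ : HistStrategy M) (ω : Fin n → X0)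
    (h : ℕ → S) : ℝ :=
  ∑ t ∈ Finset.range (M.T + 1),
    ((∑ i : Fin n, M.U t (ω i) (M.jointTraj n κ ω h t i).2 (h t) (M.jointTraj n κ ω h t i).1)
      - (n : ℝ) * M.Cc (M.aggDemandAll n κ ω h t / n) (h t)
      - (if t = 0 then (n : ℝ) * M.Hc0 (M.aggDemandAll n κ ω h 0 / n) (h 0)
          else (n : ℝ) * M.Hc (M.aggDemandAll n κ ω h (t - 1) / n)
                 (M.aggDemandAll n κ ω h t / n) (h (t - 1)) (h t)))

/-- Expected social welfare `𝒲ⁿ₀` in the `n`-consumer game under the symmetric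
profile `(κ,…,κ)`, the expectation taken over the i.i.d. consumer types
(equivalently, over the initial population state) and the Markov exogenous states. -/
def expWelfN (M : ElecModel S X0) (n : ℕ) (κ : HistStrategy M) (s0 : S) : ℝ :=
  ∑ ω : Fin n → X0, (∏ i : Fin n, M.eta s0 (ω i)) *
    M.expectHist s0 (fun h => M.welfProfile n κ ω h)

/-- Cumulative utility `Ū_{h_T}(x₀, a₀, …, a_T)` of a type-`x₀` consumer along history `h`
as a function of her action sequence, the internal states being generated by `r`. -/
def cumUtility (M : ElecModel S X0) (x0 : X0) (h : ℕ → S) (a : ℕ → ℝ) : ℝ :=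
  ∑ t ∈ Finset.range (M.T + 1), M.U t x0 (M.zTraj x0 h a t) (h t) (a t)

/-- The initial population state (empirical type distribution) of the type profile `ω`. -/
def popState (n : ℕ) (ω : Fin n → X0) (x : X0) : ℝ :=
  ((Finset.univ.filter fun i => ω i = x).card : ℝ) / n

/-- Assumptions 1–3 of the paper: differentiability of the cost functions, monotone
primary cost, marginal costs bounded by `P` and uniformly equicontinuous on `[0,∞)`,
utilities with values in `[0,Q]` and continuous in the action, internal states
staying in `[0, Zbd]`. -/
structure RegularAssumptions (M : ElecModel S X0) (P Q : ℝ) : Prop where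
  deriv_C : ∀ s : S, ∀ A ∈ Set.Ici (0 : ℝ),
    HasDerivWithinAt (fun u => M.Cc u s) (M.dC A s) (Set.Ici 0) A
  deriv_H0 : ∀ s : S, ∀ A ∈ Set.Ici (0 : ℝ),
    HasDerivWithinAt (fun u => M.Hc0 u s) (M.dH0 A s) (Set.Ici 0) A
  deriv_H1 : ∀ (s s' : S) (A' : ℝ), ∀ A ∈ Set.Ici (0 : ℝ),
    HasDerivWithinAt (fun u => M.Hc u A' s s') (M.dH1 A A' s s') (Set.Ici 0) A
  deriv_H2 : ∀ (s s' : S) (A : ℝ), ∀ A' ∈ Set.Ici (0 : ℝ),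
    HasDerivWithinAt (fun u => M.Hc A u s s') (M.dH2 A A' s s') (Set.Ici 0) A'
  C_mono : ∀ s : S, MonotoneOn (fun u => M.Cc u s) (Set.Ici 0)
  bound_C : ∀ s : S, ∀ A ∈ Set.Ici (0 : ℝ), |M.dC A s| ≤ P
  bound_H0 : ∀ s : S, ∀ A ∈ Set.Ici (0 : ℝ), |M.dH0 A s| ≤ P
  bound_H1 : ∀ (s s' : S), ∀ A' ∈ Set.Icc (0 : ℝ) M.B, ∀ A ∈ Set.Ici (0 : ℝ),
    |M.dH1 A A' s s'| ≤ P
  bound_H2 : ∀ (s s' : S), ∀ A' ∈ Set.Icc (0 : ℝ) M.B, ∀ A ∈ Set.Ici (0 : ℝ),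
    |M.dH2 A' A s s'| ≤ P
  equicont_C : ∀ ε > (0 : ℝ), ∃ δ > (0 : ℝ), ∀ s : S, ∀ A ∈ Set.Ici (0 : ℝ),
    ∀ A2 ∈ Set.Ici (0 : ℝ), |A - A2| ≤ δ → |M.dC A s - M.dC A2 s| ≤ ε
  equicont_H0 : ∀ ε > (0 : ℝ), ∃ δ > (0 : ℝ), ∀ s : S, ∀ A ∈ Set.Ici (0 : ℝ),
    ∀ A2 ∈ Set.Ici (0 : ℝ), |A - A2| ≤ δ → |M.dH0 A s - M.dH0 A2 s| ≤ ε
  equicont_H1 : ∀ ε > (0 : ℝ), ∃ δ > (0 : ℝ), ∀ (s s' : S), ∀ A' ∈ Set.Icc (0 : ℝ) M.B,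
    ∀ A ∈ Set.Ici (0 : ℝ), ∀ A2 ∈ Set.Ici (0 : ℝ),
      |A - A2| ≤ δ → |M.dH1 A A' s s' - M.dH1 A2 A' s s'| ≤ ε
  equicont_H2 : ∀ ε > (0 : ℝ), ∃ δ > (0 : ℝ), ∀ (s s' : S), ∀ A' ∈ Set.Icc (0 : ℝ) M.B,
    ∀ A ∈ Set.Ici (0 : ℝ), ∀ A2 ∈ Set.Ici (0 : ℝ),
      |A - A2| ≤ δ → |M.dH2 A' A s s' - M.dH2 A' A2 s s'| ≤ ε
  U_bounds : ∀ (t : ℕ) (x : X0) (z : ℝ) (s : S) (a : ℝ), M.U t x z s a ∈ Set.Icc (0 : ℝ) Q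
  U_cont : ∀ (t : ℕ) (x : X0) (z : ℝ) (s : S), Continuous fun a => M.U t x z s a
  Zbd_nonneg : 0 ≤ M.Zbd
  r_mem : ∀ (x : X0) (z a : ℝ) (s' : S), z ∈ Set.Icc (0 : ℝ) M.Zbd →
    a ∈ Set.Icc (0 : ℝ) M.B → M.r x z a s' ∈ Set.Icc (0 : ℝ) M.Zbd

/-- Assumption 4 of the paper (convexity): convex costs, concave cumulative utility,
monotone internal-state maps with one-sided derivatives, and utilities with one-sided
derivatives in the internal state. -/
structure ConvexAssumptions (M : ElecModel S X0) : Prop where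
  C_convex : ∀ s : S, ConvexOn ℝ Set.univ (fun A => M.Cc A s)
  H_convex : ∀ s s' : S, ConvexOn ℝ Set.univ (fun p : ℝ × ℝ => M.Hc p.1 p.2 s s')
  cumU_concave : ∀ (x0 : X0) (h : ℕ → S),
    ConcaveOn ℝ {a : ℕ → ℝ | ∀ t, a t ∈ Set.Icc (0 : ℝ) M.B} (fun a => M.cumUtility x0 h a)
  k_monotone : ∀ (x0 : X0) (h : ℕ → S) (t τ : ℕ), τ < t → ∀ a : ℕ → ℝ,
    Monotone (fun u => M.zTraj x0 h (Function.update a τ u) t) ∨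
      Antitone (fun u => M.zTraj x0 h (Function.update a τ u) t)
  k_onesided : ∀ (x0 : X0) (h : ℕ → S) (t τ : ℕ) (a : ℕ → ℝ) (u : ℝ),
    (∃ d, HasDerivWithinAt (fun v => M.zTraj x0 h (Function.update a τ v) t) d (Set.Ici u) u) ∧
    (∃ d, HasDerivWithinAt (fun v => M.zTraj x0 h (Function.update a τ v) t) d (Set.Iic u) u)
  U_z_onesided : ∀ (t : ℕ) (x : X0) (s : S) (a z : ℝ),
    (∃ d, HasDerivWithinAt (fun z' => M.U t x z' s a) d (Set.Ici z) z) ∧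
    (∃ d, HasDerivWithinAt (fun z' => M.U t x z' s a) d (Set.Iic z) z)

end ElecModel

set_option linter.unusedSectionVars false

namespace ElecModel

variable {S : Type*} {X0 : Type*} [Fintype S] [DecidableEq S] [Fintype X0] [DecidableEq X0]

section Aux

variable (M : ElecModel S X0)

/-! ### Trajectory congruence lemmas -/

lemma zTraj_congr (x : X0) (h h' : ℕ → S) (a a' : ℕ → ℝ) :
    ∀ t, (∀ τ ≤ t, h τ = h' τ) → (∀ τ < t, a τ = a' τ) →
      M.zTraj x h a t = M.zTraj x h' a' t
  | 0, _, _ => rfl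
  | t+1, hh, ha => by
      simp only [zTraj]
      rw [zTraj_congr x h h' a a' t (fun τ hτ => hh τ (le_trans hτ (Nat.le_succ t)))
          (fun τ hτ => ha τ (lt_trans hτ (Nat.lt_succ_self t))),
        ha t (Nat.lt_succ_self t), hh (t+1) le_rfl]

lemma prevActObl_congr (ν : OblStrategy M) (x : X0) (h h' : ℕ → S) :
    ∀ t, (∀ τ ≤ t, h τ = h' τ) → M.prevActObl ν x h t = M.prevActObl ν x h' t
  | 0, _ => rfl
  | t+1, hh => ν.act_prefix t x h h' (fun τ hτ => hh τ (le_trans hτ (Nat.le_succ t)))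

lemma zTrajObl_congr (ν : OblStrategy M) (x : X0) (h h' : ℕ → S) (t : ℕ)
    (hh : ∀ τ ≤ t, h τ = h' τ) :
    M.zTraj x h (fun τ => ν.act τ x h) t = M.zTraj x h' (fun τ => ν.act τ x h') t :=
  M.zTraj_congr x h h' _ _ t hh (fun τ hτ => ν.act_prefix τ x h h'
    (fun σ hσ => hh σ (le_trans hσ (le_of_lt hτ))))

lemma othersAug_congr (m : ℕ) (ν : OblStrategy M) (ω : Fin m → X0) (h h' : ℕ → S) (t : ℕ)
    (hh : ∀ τ ≤ t, h τ = h' τ) : M.othersAug m ν ω h t = M.othersAug m ν ω h' t := by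
  unfold othersAug
  congr 1
  funext j
  rw [M.prevActObl_congr ν (ω j) h h' t hh, M.zTrajObl_congr ν (ω j) h h' t hh]

lemma iTraj_congr (m : ℕ) (κ : HistStrategy M) (ν : OblStrategy M) (x0 : X0)
    (ω : Fin m → X0) (h h' : ℕ → S) :
    ∀ t, (∀ τ ≤ t, h τ = h' τ) → M.iTraj m κ ν x0 ω h t = M.iTraj m κ ν x0 ω h' t
  | 0, hh => by
      simp only [iTraj]
      rw [M.othersAug_congr m ν ω h h' 0 (fun τ hτ => hh τ hτ),
        κ.act_prefix 0 _ h h' _ (fun τ hτ => hh τ hτ)]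
  | t+1, hh => by
      have hht : ∀ τ ≤ t, h τ = h' τ := fun τ hτ => hh τ (le_trans hτ (Nat.le_succ t))
      simp only [iTraj]
      rw [iTraj_congr m κ ν x0 ω h h' t hht, hh (t+1) le_rfl,
        M.othersAug_congr m ν ω h h' (t+1) hh, κ.act_prefix (t+1) _ h h' _ hh]

lemma iTraj_fst_mem (m : ℕ) (κ : HistStrategy M) (ν : OblStrategy M) (x0 : X0)
    (ω : Fin m → X0) (h : ℕ → S) :
    ∀ t, (M.iTraj m κ ν x0 ω h t).1 ∈ Set.Icc (0:ℝ) M.B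
  | 0 => κ.act_mem _ _ _ _
  | _+1 => κ.act_mem _ _ _ _

lemma iTraj_snd (m : ℕ) (κ : HistStrategy M) (ν : OblStrategy M) (x0 : X0)
    (ω : Fin m → X0) (h : ℕ → S) :
    ∀ t, (M.iTraj m κ ν x0 ω h t).2
      = M.zTraj x0 h (fun τ => (M.iTraj m κ ν x0 ω h τ).1) t
  | 0 => rfl
  | t+1 => by
      simp only [iTraj, zTraj]
      rw [← iTraj_snd m κ ν x0 ω h t]

/-- The oblivious strategy induced (for consumer `i`) by a history-dependent strategy `κ`
when the other `m` consumers have types `ω` and use `ν`. -/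
def inducedObl (m : ℕ) (κ : HistStrategy M) (ν : OblStrategy M) (x0 : X0)
    (ω : Fin m → X0) : OblStrategy M where
  act := fun t _ h => (M.iTraj m κ ν x0 ω h t).1
  act_mem := fun t _ h => M.iTraj_fst_mem m κ ν x0 ω h t
  act_prefix := fun t _ h h' hp =>
    congrArg Prod.fst (M.iTraj_congr m κ ν x0 ω h h' t hp)

lemma iTraj_toHist (m : ℕ) (ν : OblStrategy M) (x0 : X0) (ω : Fin m → X0) (h : ℕ → S) :
    ∀ t, M.iTraj m ν.toHist ν x0 ω h t
      = (ν.act t x0 h, M.zTraj x0 h (fun τ => ν.act τ x0 h) t)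
  | 0 => rfl
  | t+1 => by
      simp only [iTraj, zTraj]
      rw [iTraj_toHist m ν x0 ω h t]
      rfl

lemma oblStageSum_eq_of_act_eq (νhat νhat' ν : OblStrategy M) (s0 : S) (x0 : X0) (h : ℕ → S)
    (hact : ∀ t, νhat.act t x0 h = νhat'.act t x0 h) :
    M.oblStageSum νhat ν s0 x0 h = M.oblStageSum νhat' ν s0 x0 h := by
  unfold oblStageSum
  have hfun : (fun τ => νhat.act τ x0 h) = fun τ => νhat'.act τ x0 h := funext hact
  refine Finset.sum_congr rfl fun t _ => ?_
  rw [hfun]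
  simp only [hact]

end Aux

end ElecModel

namespace ElecModel

section Prob

variable {S : Type*} {X0 : Type*} [Fintype S] [DecidableEq S] [Fintype X0] [DecidableEq X0]
variable (M : ElecModel S X0)

lemma markov_mass (K : S → S → ℝ) (hK : ∀ s, ∑ s' : S, K s s' = 1) :
    ∀ (k : ℕ) (s0 : S),
      ∑ g : Fin (k+1) → S, (if g 0 = s0 then (1:ℝ) else 0)
        * ∏ t : Fin k, K (g t.castSucc) (g t.succ) = 1
  | 0, s0 => by
      rw [← (Equiv.funUnique (Fin 1) S).symm.sum_comp]
      simp
  | k+1, s0 => by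
      have hE : ∀ (s : S) (f : Fin (k+1) → S),
          (Fin.snocEquiv (fun _ : Fin (k+2) => S)) (s, f) = Fin.snoc f s := fun _ _ => rfl
      rw [← (Fin.snocEquiv (fun _ : Fin (k+2) => S)).sum_comp, Fintype.sum_prod_type_right]
      simp only [hE]
      have hsummand : ∀ (f : Fin (k+1) → S) (s : S),
          (if (Fin.snoc f s : Fin (k+2) → S) 0 = s0 then (1:ℝ) else 0)
            * ∏ t : Fin (k+1), K ((Fin.snoc f s : Fin (k+2) → S) t.castSucc)
                ((Fin.snoc f s : Fin (k+2) → S) t.succ)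
          = ((if f 0 = s0 then (1:ℝ) else 0)
              * ∏ t : Fin k, K (f t.castSucc) (f t.succ)) * K (f (Fin.last k)) s := by
        intro f s
        have he : ∀ i : Fin (k+1), (Fin.snoc f s : Fin (k+2) → S) i.castSucc = f i :=
          fun i => by simp
        have helast : (Fin.snoc f s : Fin (k+2) → S) (Fin.last (k+1)) = s := by simp
        have h0 : (Fin.snoc f s : Fin (k+2) → S) 0 = f 0 := by
          rw [show (0 : Fin (k+2)) = (0 : Fin (k+1)).castSucc from rfl, he]
        rw [h0, Fin.prod_univ_castSucc]
        have hlastfac : K ((Fin.snoc f s : Fin (k+2) → S) (Fin.last k).castSucc)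
            ((Fin.snoc f s : Fin (k+2) → S) (Fin.last k).succ)
            = K (f (Fin.last k)) s := by
          rw [he, Fin.succ_last, helast]
        have hfac : ∀ t : Fin k,
            K ((Fin.snoc f s : Fin (k+2) → S) t.castSucc.castSucc)
              ((Fin.snoc f s : Fin (k+2) → S) t.castSucc.succ)
              = K (f t.castSucc) (f t.succ) := by
          intro t
          rw [he, Fin.succ_castSucc, he]
        rw [hlastfac, Finset.prod_congr rfl (fun t _ => hfac t)]
        ring
      calc ∑ f : Fin (k+1) → S, ∑ s : S,
            (if (Fin.snoc f s : Fin (k+2) → S) 0 = s0 then (1:ℝ) else 0)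
              * ∏ t : Fin (k+1), K ((Fin.snoc f s : Fin (k+2) → S) t.castSucc)
                  ((Fin.snoc f s : Fin (k+2) → S) t.succ)
          = ∑ f : Fin (k+1) → S, ((if f 0 = s0 then (1:ℝ) else 0)
              * ∏ t : Fin k, K (f t.castSucc) (f t.succ)) * ∑ s : S, K (f (Fin.last k)) s := by
            refine Finset.sum_congr rfl fun f _ => ?_
            rw [Finset.mul_sum]
            exact Finset.sum_congr rfl fun s _ => hsummand f s
        _ = 1 := by
            simp only [hK, mul_one]
            exact markov_mass K hK k s0

lemma histProb_nonneg (s0 : S) (h : ℕ → S) : 0 ≤ M.histProb s0 h := by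
  unfold histProb
  refine mul_nonneg ?_ (Finset.prod_nonneg fun t _ => M.K_nonneg _ _)
  split <;> norm_num

lemma sum_histProb (s0 : S) :
    ∑ g : Fin (M.T+1) → S, M.histProb s0 (M.extendHist g) = 1 := by
  have key := markov_mass M.K M.K_sum M.T s0
  rw [← key]
  refine Finset.sum_congr rfl fun g _ => ?_
  unfold histProb
  have h0 : M.extendHist g 0 = g 0 := by
    unfold extendHist; congr 1
  rw [h0]
  congr 1
  rw [← Fin.prod_univ_eq_prod_range
    (fun i => M.K (M.extendHist g i) (M.extendHist g (i+1))) M.T]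
  refine Finset.prod_congr rfl fun t _ => ?_
  have h1 : M.extendHist g (t : ℕ) = g t.castSucc := by
    unfold extendHist; congr 1
    exact Fin.ext (by simp [Nat.min_eq_left (le_of_lt t.isLt)])
  have h2 : M.extendHist g ((t : ℕ) + 1) = g t.succ := by
    unfold extendHist; congr 1
    exact Fin.ext (by simp [Nat.min_eq_left (Nat.succ_le_of_lt t.isLt)])
  rw [h1, h2]

lemma expectHist_mono (s0 : S) {F G : (ℕ → S) → ℝ} (hFG : ∀ h, F h ≤ G h) :
    M.expectHist s0 F ≤ M.expectHist s0 G :=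
  Finset.sum_le_sum fun g _ => mul_le_mul_of_nonneg_left (hFG _) (M.histProb_nonneg _ _)

lemma expectHist_const (s0 : S) (c : ℝ) : M.expectHist s0 (fun _ => c) = c := by
  unfold expectHist
  rw [← Finset.sum_mul, M.sum_histProb s0, one_mul]

lemma expectHist_add (s0 : S) (F G : (ℕ → S) → ℝ) :
    M.expectHist s0 (fun h => F h + G h) = M.expectHist s0 F + M.expectHist s0 G := by
  unfold expectHist
  rw [← Finset.sum_add_distrib]
  exact Finset.sum_congr rfl fun g _ => mul_add _ _ _

lemma abs_expectHist_le (s0 : S) {F : (ℕ → S) → ℝ} {C : ℝ} (hF : ∀ h, |F h| ≤ C) :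
    |M.expectHist s0 F| ≤ C := by
  calc |M.expectHist s0 F|
      ≤ ∑ g : Fin (M.T+1) → S, |M.histProb s0 (M.extendHist g) * F (M.extendHist g)| :=
        Finset.abs_sum_le_sum_abs _ _
    _ ≤ ∑ g : Fin (M.T+1) → S, M.histProb s0 (M.extendHist g) * C := by
        refine Finset.sum_le_sum fun g _ => ?_
        rw [abs_mul, abs_of_nonneg (M.histProb_nonneg _ _)]
        exact mul_le_mul_of_nonneg_left (hF _) (M.histProb_nonneg _ _)
    _ = C := by rw [← Finset.sum_mul, M.sum_histProb s0, one_mul]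

lemma sum_pi_eta (s0 : S) (m : ℕ) :
    ∑ ω : Fin m → X0, ∏ j, M.eta s0 (ω j) = 1 := by
  rw [← Fintype.prod_sum (fun (_ : Fin m) (x : X0) => M.eta s0 x)]
  simp [M.eta_sum s0]

lemma pi_eta_nonneg (s0 : S) (m : ℕ) (ω : Fin m → X0) :
    0 ≤ ∏ j, M.eta s0 (ω j) :=
  Finset.prod_nonneg fun _ _ => M.eta_nonneg _ _

lemma exp_sq_le (s0 : S) (m : ℕ) (Y : X0 → ℝ) {b : ℝ}
    (hmean : ∑ x : X0, M.eta s0 x * Y x = 0) (hb : ∀ x, |Y x| ≤ b) (hb0 : 0 ≤ b) :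
    ∑ ω : Fin m → X0, (∏ j, M.eta s0 (ω j)) * (∑ j, Y (ω j))^2 ≤ m * b^2 := by
  have key : ∀ j k : Fin m,
      ∑ ω : Fin m → X0, (∏ i, M.eta s0 (ω i)) * (Y (ω j) * Y (ω k))
        = ∏ i : Fin m, ∑ x : X0,
            M.eta s0 x * ((if i = j then Y x else 1) * (if i = k then Y x else 1)) := by
    intro j k
    rw [Fintype.prod_sum (fun (i : Fin m) (x : X0) =>
      M.eta s0 x * ((if i = j then Y x else 1) * (if i = k then Y x else 1)))]
    refine Finset.sum_congr rfl fun ω _ => ?_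
    rw [Finset.prod_mul_distrib, Finset.prod_mul_distrib,
      Finset.prod_ite_eq' Finset.univ j (fun i => Y (ω i)),
      Finset.prod_ite_eq' Finset.univ k (fun i => Y (ω i))]
    simp
  have offdiag : ∀ j k : Fin m, j ≠ k →
      ∑ ω : Fin m → X0, (∏ i, M.eta s0 (ω i)) * (Y (ω j) * Y (ω k)) = 0 := by
    intro j k hjk
    rw [key j k]
    refine Finset.prod_eq_zero (Finset.mem_univ k) ?_
    simp only [if_neg (Ne.symm hjk), if_pos rfl, one_mul]
    exact hmean
  have diag : ∀ j : Fin m,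
      ∑ ω : Fin m → X0, (∏ i, M.eta s0 (ω i)) * (Y (ω j) * Y (ω j)) ≤ b^2 := by
    intro j
    rw [key j j]
    have h1 : ∀ i ∈ (Finset.univ : Finset (Fin m)), i ≠ j →
        (∑ x : X0, M.eta s0 x * ((if i = j then Y x else 1) * (if i = j then Y x else 1))) = 1 := by
      intro i _ hij
      simp only [if_neg hij, one_mul, mul_one]
      exact M.eta_sum s0
    have hprod : (∏ i : Fin m, ∑ x : X0,
        M.eta s0 x * ((if i = j then Y x else 1) * (if i = j then Y x else 1)))
        = ∑ x : X0, M.eta s0 x * (Y x * Y x) := by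
      rw [Finset.prod_eq_single j h1 (fun h => absurd (Finset.mem_univ j) h)]
      simp
    rw [hprod]
    calc ∑ x : X0, M.eta s0 x * (Y x * Y x)
        ≤ ∑ x : X0, M.eta s0 x * (b * b) := by
          refine Finset.sum_le_sum fun x _ => ?_
          refine mul_le_mul_of_nonneg_left ?_ (M.eta_nonneg _ _)
          calc Y x * Y x = |Y x| * |Y x| := (abs_mul_abs_self _).symm
            _ ≤ b * b := mul_le_mul (hb x) (hb x) (abs_nonneg _) hb0
      _ = b^2 := by rw [← Finset.sum_mul, M.eta_sum s0, one_mul, sq]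
  have expand : ∑ ω : Fin m → X0, (∏ j, M.eta s0 (ω j)) * (∑ j, Y (ω j))^2
      = ∑ j : Fin m, ∑ k : Fin m,
          ∑ ω : Fin m → X0, (∏ i, M.eta s0 (ω i)) * (Y (ω j) * Y (ω k)) := by
    have hω : ∀ ω : Fin m → X0, (∏ i, M.eta s0 (ω i)) * (∑ j, Y (ω j))^2
        = ∑ j : Fin m, ∑ k : Fin m, (∏ i, M.eta s0 (ω i)) * (Y (ω j) * Y (ω k)) := by
      intro ω
      rw [sq, Finset.sum_mul_sum, Finset.mul_sum]
      exact Finset.sum_congr rfl fun j _ => by rw [Finset.mul_sum]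
    rw [Finset.sum_congr rfl (fun ω _ => hω ω), Finset.sum_comm]
    exact Finset.sum_congr rfl fun j _ => Finset.sum_comm
  rw [expand]
  calc ∑ j : Fin m, ∑ k : Fin m,
        ∑ ω : Fin m → X0, (∏ i, M.eta s0 (ω i)) * (Y (ω j) * Y (ω k))
      = ∑ j : Fin m, ∑ ω : Fin m → X0, (∏ i, M.eta s0 (ω i)) * (Y (ω j) * Y (ω j)) := by
        refine Finset.sum_congr rfl fun j _ => ?_
        exact Finset.sum_eq_single j (fun k _ hk => offdiag j k (Ne.symm hk))
          (fun h => absurd (Finset.mem_univ j) h)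
    _ ≤ ∑ _j : Fin m, b^2 := Finset.sum_le_sum fun j _ => diag j
    _ = m * b^2 := by rw [Finset.sum_const, Finset.card_univ, Fintype.card_fin, nsmul_eq_mul]

lemma exp_abs_le (s0 : S) (m : ℕ) (Y : X0 → ℝ) {b : ℝ}
    (hmean : ∑ x : X0, M.eta s0 x * Y x = 0) (hb : ∀ x, |Y x| ≤ b) (hb0 : 0 < b) :
    ∑ ω : Fin m → X0, (∏ j, M.eta s0 (ω j)) * |∑ j, Y (ω j)| ≤ b * Real.sqrt m := by
  rcases Nat.eq_zero_or_pos m with rfl | hm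
  · have hz : ∀ ω : Fin 0 → X0, |∑ j : Fin 0, Y (ω j)| = 0 := by intro ω; simp
    simp [hz, Real.sqrt_zero]
  · have hsm : 0 < Real.sqrt m := Real.sqrt_pos.mpr (by exact_mod_cast hm)
    set c := b * Real.sqrt m with hc
    have hcpos : 0 < c := mul_pos hb0 hsm
    have hss : Real.sqrt m * Real.sqrt m = (m:ℝ) := Real.mul_self_sqrt (Nat.cast_nonneg m)
    have hmb : (m : ℝ) * b^2 = c * c := by rw [hc]; linear_combination (-b^2) * hss
    have habs : ∀ ω : Fin m → X0,
        |∑ j, Y (ω j)| ≤ (∑ j, Y (ω j))^2 / (2*c) + c/2 := by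
      intro ω
      rw [div_add' _ _ _ (by positivity : (2:ℝ)*c ≠ 0), le_div_iff₀ (by positivity)]
      nlinarith [sq_nonneg (|∑ j, Y (ω j)| - c), sq_abs (∑ j, Y (ω j))]
    calc ∑ ω : Fin m → X0, (∏ j, M.eta s0 (ω j)) * |∑ j, Y (ω j)|
        ≤ ∑ ω : Fin m → X0, (∏ j, M.eta s0 (ω j))
            * ((∑ j, Y (ω j))^2 / (2*c) + c/2) := by
          exact Finset.sum_le_sum fun ω _ =>
            mul_le_mul_of_nonneg_left (habs ω) (M.pi_eta_nonneg s0 m ω)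
      _ = (∑ ω : Fin m → X0, (∏ j, M.eta s0 (ω j)) * (∑ j, Y (ω j))^2) / (2*c)
            + (∑ ω : Fin m → X0, (∏ j, M.eta s0 (ω j))) * (c/2) := by
          have hsplit : ∀ ω : Fin m → X0,
              (∏ j, M.eta s0 (ω j)) * ((∑ j, Y (ω j))^2 / (2*c) + c/2)
                = (∏ j, M.eta s0 (ω j)) * (∑ j, Y (ω j))^2 / (2*c)
                  + (∏ j, M.eta s0 (ω j)) * (c/2) := fun ω => by ring
          rw [Finset.sum_congr rfl fun ω _ => hsplit ω, Finset.sum_add_distrib]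
          congr 1
          · rw [Finset.sum_div]
          · rw [Finset.sum_mul]
      _ ≤ (m * b^2) / (2*c) + c/2 := by
          rw [M.sum_pi_eta s0 m, one_mul]
          refine add_le_add_left ?_ _
          exact (div_le_div_iff_of_pos_right (by positivity)).mpr (M.exp_sq_le s0 m Y hmean hb hb0.le)
      _ = c := by
          rw [hmb]; field_simp; ring

end Prob

end ElecModel

namespace ElecModel

section Analysis

variable {S : Type*} {X0 : Type*} [Fintype S] [DecidableEq S] [Fintype X0] [DecidableEq X0]

/-- If `F` has derivative `F'` on `[0,Bd]`, `F'` oscillates by at most `ε₁` on a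
`δ₁`-neighborhood of `u`, and `|F| ≤ Mb`, then `|F' u| ≤ ε₁ + 2 Mb / δ₁`. -/
lemma deriv_bound_of_osc (F F' : ℝ → ℝ) (u ε₁ δ₁ Mb Bd : ℝ)
    (hδ₁ : 0 < δ₁) (hB2 : δ₁ ≤ Bd/2) (hu : u ∈ Set.Icc (0:ℝ) Bd)
    (hder : ∀ w ∈ Set.Icc (0:ℝ) Bd, HasDerivWithinAt F (F' w) (Set.Icc (0:ℝ) Bd) w)
    (hosc : ∀ w ∈ Set.Icc (0:ℝ) Bd, |w - u| ≤ δ₁ → |F' w - F' u| ≤ ε₁)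
    (hF : ∀ w ∈ Set.Icc (0:ℝ) Bd, |F w| ≤ Mb) :
    |F' u| ≤ ε₁ + 2 * Mb / δ₁ := by
  obtain ⟨hu0, huB⟩ := hu
  set c := if u + δ₁ ≤ Bd then u else u - δ₁ with hcdef
  have hcfacts : 0 ≤ c ∧ c + δ₁ ≤ Bd ∧ c ≤ u ∧ u ≤ c + δ₁ := by
    rw [hcdef]; split_ifs with hcase
    · exact ⟨hu0, hcase, le_rfl, by linarith⟩
    · push_neg at hcase
      refine ⟨by linarith, by linarith, by linarith, by linarith⟩
  obtain ⟨hc0, hcB, hcu, huc⟩ := hcfacts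
  have hsub : Set.Icc c (c+δ₁) ⊆ Set.Icc (0:ℝ) Bd := Set.Icc_subset_Icc hc0 hcB
  have hlm : c ∈ Set.Icc c (c+δ₁) := Set.left_mem_Icc.mpr (by linarith)
  have hrm : c + δ₁ ∈ Set.Icc c (c+δ₁) := Set.right_mem_Icc.mpr (by linarith)
  have hgder : ∀ w ∈ Set.Icc c (c+δ₁),
      HasDerivWithinAt (fun w => F w - F' u * w) (F' w - F' u) (Set.Icc c (c+δ₁)) w := by
    intro w hw
    have h1 := (hder w (hsub hw)).mono hsub
    have h2 : HasDerivWithinAt (fun w : ℝ => F' u * w) (F' u) (Set.Icc c (c+δ₁)) w := by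
      simpa using (hasDerivWithinAt_id w (Set.Icc c (c+δ₁))).const_mul (F' u)
    exact h1.sub h2
  have hbd : ∀ w ∈ Set.Icc c (c+δ₁), ‖F' w - F' u‖ ≤ ε₁ := by
    intro w hw
    rw [Real.norm_eq_abs]
    refine hosc w (hsub hw) ?_
    rw [abs_le]
    exact ⟨by linarith [hw.1], by linarith [hw.2]⟩
  have hmvt := Convex.norm_image_sub_le_of_norm_hasDerivWithin_le hgder hbd
    (convex_Icc _ _) hlm hrm
  have hnorm : ‖(c + δ₁) - c‖ = δ₁ := by
    rw [Real.norm_eq_abs, abs_of_pos (by linarith)]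
    ring
  rw [hnorm] at hmvt
  have heq : (F (c+δ₁) - F' u * (c+δ₁)) - (F c - F' u * c)
      = F (c+δ₁) - F c - F' u * δ₁ := by ring
  rw [Real.norm_eq_abs] at hmvt
  have habs3 : |F (c+δ₁) - F c - F' u * δ₁| ≤ ε₁ * δ₁ := by
    calc |F (c+δ₁) - F c - F' u * δ₁|
        = |(F (c+δ₁) - F' u * (c+δ₁)) - (F c - F' u * c)| := by rw [heq]
      _ ≤ ε₁ * δ₁ := hmvt
  have hFc := hF c (hsub hlm)
  have hFd := hF (c+δ₁) (hsub hrm)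
  have hdiv : 2 * Mb / δ₁ * δ₁ = 2 * Mb := div_mul_cancel₀ _ (ne_of_gt hδ₁)
  obtain ⟨h3l, h3r⟩ := abs_le.mp habs3
  obtain ⟨hFcl, hFcr⟩ := abs_le.mp hFc
  obtain ⟨hFdl, hFdr⟩ := abs_le.mp hFd
  rw [abs_le]
  constructor
  · nlinarith [hdiv, hδ₁]
  · nlinarith [hdiv, hδ₁]

variable (M : ElecModel S X0)

lemma P_nonneg [Nonempty S] {P Q : ℝ} (hreg : M.RegularAssumptions P Q) : 0 ≤ P :=
  le_trans (abs_nonneg _)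
    (hreg.bound_C (Classical.arbitrary S) 0 (Set.mem_Ici.mpr le_rfl))

lemma dH1_mod_snd {P Q : ℝ} (hreg : M.RegularAssumptions P Q) (hP : 0 ≤ P) :
    ∀ ε > (0:ℝ), ∃ δ > (0:ℝ), ∀ s s' : S, ∀ u ∈ Set.Icc (0:ℝ) M.B,
      ∀ v ∈ Set.Icc (0:ℝ) M.B, ∀ v' ∈ Set.Icc (0:ℝ) M.B, |v - v'| ≤ δ →
        |M.dH1 u v s s' - M.dH1 u v' s s'| ≤ ε := by
  intro ε hε
  obtain ⟨δ₁', hδ₁'pos, hδ₁'⟩ := hreg.equicont_H1 (ε/4) (by positivity)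
  have hBpos := M.B_pos
  set δ₁ := min δ₁' (M.B/2) with hδ₁def
  have hδ₁pos : 0 < δ₁ := lt_min hδ₁'pos (by positivity)
  have hδ₁B : δ₁ ≤ M.B/2 := min_le_right _ _
  refine ⟨ε * δ₁ / (4*(P+1)), by positivity, ?_⟩
  intro s s' u hu v hv v' hv' hvv'
  have hIci : Set.Icc (0:ℝ) M.B ⊆ Set.Ici 0 := fun w hw => hw.1
  -- the function w ↦ Hc w v - Hc w v' and its derivative
  have hder : ∀ w ∈ Set.Icc (0:ℝ) M.B,
      HasDerivWithinAt (fun w => M.Hc w v s s' - M.Hc w v' s s')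
        (M.dH1 w v s s' - M.dH1 w v' s s') (Set.Icc (0:ℝ) M.B) w := by
    intro w hw
    exact ((hreg.deriv_H1 s s' v w (hIci hw)).mono hIci).sub
      ((hreg.deriv_H1 s s' v' w (hIci hw)).mono hIci)
  have hosc : ∀ w ∈ Set.Icc (0:ℝ) M.B, |w - u| ≤ δ₁ →
      |(M.dH1 w v s s' - M.dH1 w v' s s') - (M.dH1 u v s s' - M.dH1 u v' s s')| ≤ ε/2 := by
    intro w hw hwu
    have h1 : |M.dH1 w v s s' - M.dH1 u v s s'| ≤ ε/4 :=
      hδ₁' s s' v hv w (hIci hw) u (hIci hu) (le_trans hwu (min_le_left _ _))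
    have h2 : |M.dH1 w v' s s' - M.dH1 u v' s s'| ≤ ε/4 :=
      hδ₁' s s' v' hv' w (hIci hw) u (hIci hu) (le_trans hwu (min_le_left _ _))
    calc |(M.dH1 w v s s' - M.dH1 w v' s s') - (M.dH1 u v s s' - M.dH1 u v' s s')|
        = |(M.dH1 w v s s' - M.dH1 u v s s') - (M.dH1 w v' s s' - M.dH1 u v' s s')| := by
          congr 1; ring
      _ ≤ |M.dH1 w v s s' - M.dH1 u v s s'| + |M.dH1 w v' s s' - M.dH1 u v' s s'| :=
          abs_sub _ _
      _ ≤ ε/4 + ε/4 := add_le_add h1 h2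
      _ = ε/2 := by ring
  have hFbd : ∀ w ∈ Set.Icc (0:ℝ) M.B,
      |M.Hc w v s s' - M.Hc w v' s s'| ≤ P * |v - v'| := by
    intro w hw
    have hmin0 : (0:ℝ) ≤ min v v' := le_min hv.1 hv'.1
    have hsub2 : Set.Icc (min v v') (max v v') ⊆ Set.Ici (0:ℝ) :=
      fun z hz => le_trans hmin0 hz.1
    have hder2 : ∀ z ∈ Set.Icc (min v v') (max v v'),
        HasDerivWithinAt (fun z => M.Hc w z s s') (M.dH2 w z s s')
          (Set.Icc (min v v') (max v v')) z := by
      intro z hz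
      exact (hreg.deriv_H2 s s' w z (hsub2 hz)).mono hsub2
    have hbd2 : ∀ z ∈ Set.Icc (min v v') (max v v'), ‖M.dH2 w z s s'‖ ≤ P := by
      intro z hz
      rw [Real.norm_eq_abs]
      exact hreg.bound_H2 s s' w hw z (hsub2 hz)
    have := Convex.norm_image_sub_le_of_norm_hasDerivWithin_le hder2 hbd2
      (convex_Icc _ _)
      (Set.mem_Icc.mpr ⟨min_le_right v v', le_max_right v v'⟩)
      (Set.mem_Icc.mpr ⟨min_le_left v v', le_max_left v v'⟩)
    simpa [Real.norm_eq_abs] using this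
  have hkey := deriv_bound_of_osc
    (fun w => M.Hc w v s s' - M.Hc w v' s s')
    (fun w => M.dH1 w v s s' - M.dH1 w v' s s')
    u (ε/2) δ₁ (P * |v - v'|) M.B hδ₁pos hδ₁B hu hder hosc hFbd
  calc |M.dH1 u v s s' - M.dH1 u v' s s'| ≤ ε/2 + 2 * (P * |v - v'|) / δ₁ := hkey
    _ ≤ ε/2 + 2 * (P * (ε * δ₁ / (4*(P+1)))) / δ₁ := by
        have h1 : P * |v - v'| ≤ P * (ε * δ₁ / (4*(P+1))) :=
          mul_le_mul_of_nonneg_left hvv' hP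
        have h2 : (2:ℝ) * (P * |v - v'|) ≤ 2 * (P * (ε * δ₁ / (4*(P+1)))) := by linarith
        have h3 := (div_le_div_iff_of_pos_right hδ₁pos).mpr h2
        linarith
    _ ≤ ε := by
        have heval : 2 * (P * (ε * δ₁ / (4*(P+1)))) / δ₁ = ε * (P/(P+1)) / 2 := by
          field_simp
          ring
        have hfrac : P/(P+1) ≤ 1 := by
          rw [div_le_one (by positivity)]
          linarith
        have hle1 : ε * (P/(P+1)) / 2 ≤ ε * 1 / 2 := by gcongr
        rw [heval]
        linarith

lemma dH2_mod_fst {P Q : ℝ} (hreg : M.RegularAssumptions P Q) (hP : 0 ≤ P) :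
    ∀ ε > (0:ℝ), ∃ δ > (0:ℝ), ∀ s s' : S, ∀ v ∈ Set.Icc (0:ℝ) M.B,
      ∀ u ∈ Set.Icc (0:ℝ) M.B, ∀ u' ∈ Set.Icc (0:ℝ) M.B, |u - u'| ≤ δ →
        |M.dH2 u v s s' - M.dH2 u' v s s'| ≤ ε := by
  intro ε hε
  obtain ⟨δ₁', hδ₁'pos, hδ₁'⟩ := hreg.equicont_H2 (ε/4) (by positivity)
  have hBpos := M.B_pos
  set δ₁ := min δ₁' (M.B/2) with hδ₁def
  have hδ₁pos : 0 < δ₁ := lt_min hδ₁'pos (by positivity)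
  have hδ₁B : δ₁ ≤ M.B/2 := min_le_right _ _
  refine ⟨ε * δ₁ / (4*(P+1)), by positivity, ?_⟩
  intro s s' v hv u hu u' hu' huu'
  have hIci : Set.Icc (0:ℝ) M.B ⊆ Set.Ici 0 := fun w hw => hw.1
  have hder : ∀ w ∈ Set.Icc (0:ℝ) M.B,
      HasDerivWithinAt (fun w => M.Hc u w s s' - M.Hc u' w s s')
        (M.dH2 u w s s' - M.dH2 u' w s s') (Set.Icc (0:ℝ) M.B) w := by
    intro w hw
    exact ((hreg.deriv_H2 s s' u w (hIci hw)).mono hIci).sub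
      ((hreg.deriv_H2 s s' u' w (hIci hw)).mono hIci)
  have hosc : ∀ w ∈ Set.Icc (0:ℝ) M.B, |w - v| ≤ δ₁ →
      |(M.dH2 u w s s' - M.dH2 u' w s s') - (M.dH2 u v s s' - M.dH2 u' v s s')| ≤ ε/2 := by
    intro w hw hwv
    have h1 : |M.dH2 u w s s' - M.dH2 u v s s'| ≤ ε/4 :=
      hδ₁' s s' u hu w (hIci hw) v (hIci hv) (le_trans hwv (min_le_left _ _))
    have h2 : |M.dH2 u' w s s' - M.dH2 u' v s s'| ≤ ε/4 :=
      hδ₁' s s' u' hu' w (hIci hw) v (hIci hv) (le_trans hwv (min_le_left _ _))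
    calc |(M.dH2 u w s s' - M.dH2 u' w s s') - (M.dH2 u v s s' - M.dH2 u' v s s')|
        = |(M.dH2 u w s s' - M.dH2 u v s s') - (M.dH2 u' w s s' - M.dH2 u' v s s')| := by
          congr 1; ring
      _ ≤ |M.dH2 u w s s' - M.dH2 u v s s'| + |M.dH2 u' w s s' - M.dH2 u' v s s'| :=
          abs_sub _ _
      _ ≤ ε/4 + ε/4 := add_le_add h1 h2
      _ = ε/2 := by ring
  have hFbd : ∀ w ∈ Set.Icc (0:ℝ) M.B,
      |M.Hc u w s s' - M.Hc u' w s s'| ≤ P * |u - u'| := by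
    intro w hw
    have hmin0 : (0:ℝ) ≤ min u u' := le_min hu.1 hu'.1
    have hsub2 : Set.Icc (min u u') (max u u') ⊆ Set.Ici (0:ℝ) :=
      fun z hz => le_trans hmin0 hz.1
    have hder2 : ∀ z ∈ Set.Icc (min u u') (max u u'),
        HasDerivWithinAt (fun z => M.Hc z w s s') (M.dH1 z w s s')
          (Set.Icc (min u u') (max u u')) z := by
      intro z hz
      exact (hreg.deriv_H1 s s' w z (hsub2 hz)).mono hsub2
    have hbd2 : ∀ z ∈ Set.Icc (min u u') (max u u'), ‖M.dH1 z w s s'‖ ≤ P := by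
      intro z hz
      rw [Real.norm_eq_abs]
      exact hreg.bound_H1 s s' w hw z (hsub2 hz)
    have := Convex.norm_image_sub_le_of_norm_hasDerivWithin_le hder2 hbd2
      (convex_Icc _ _)
      (Set.mem_Icc.mpr ⟨min_le_right u u', le_max_right u u'⟩)
      (Set.mem_Icc.mpr ⟨min_le_left u u', le_max_left u u'⟩)
    simpa [Real.norm_eq_abs] using this
  have hkey := deriv_bound_of_osc
    (fun w => M.Hc u w s s' - M.Hc u' w s s')
    (fun w => M.dH2 u w s s' - M.dH2 u' w s s')
    v (ε/2) δ₁ (P * |u - u'|) M.B hδ₁pos hδ₁B hv hder hosc hFbd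
  calc |M.dH2 u v s s' - M.dH2 u' v s s'| ≤ ε/2 + 2 * (P * |u - u'|) / δ₁ := hkey
    _ ≤ ε/2 + 2 * (P * (ε * δ₁ / (4*(P+1)))) / δ₁ := by
        have h1 : P * |u - u'| ≤ P * (ε * δ₁ / (4*(P+1))) :=
          mul_le_mul_of_nonneg_left huu' hP
        have h2 : (2:ℝ) * (P * |u - u'|) ≤ 2 * (P * (ε * δ₁ / (4*(P+1)))) := by linarith
        have h3 := (div_le_div_iff_of_pos_right hδ₁pos).mpr h2
        linarith
    _ ≤ ε := by
        have heval : 2 * (P * (ε * δ₁ / (4*(P+1)))) / δ₁ = ε * (P/(P+1)) / 2 := by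
          field_simp
          ring
        have hfrac : P/(P+1) ≤ 1 := by
          rw [div_le_one (by positivity)]
          linarith
        have hle1 : ε * (P/(P+1)) / 2 ≤ ε * 1 / 2 := by gcongr
        rw [heval]
        linarith

lemma price_mod {P Q : ℝ} (hreg : M.RegularAssumptions P Q) (hP : 0 ≤ P) :
    ∀ ε > (0:ℝ), ∃ δ > (0:ℝ), ∀ s s' : S,
      ∀ u ∈ Set.Icc (0:ℝ) M.B, ∀ u' ∈ Set.Icc (0:ℝ) M.B,
      ∀ v ∈ Set.Icc (0:ℝ) M.B, ∀ v' ∈ Set.Icc (0:ℝ) M.B, |u - u'| ≤ δ → |v - v'| ≤ δ →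
        |M.dC u s - M.dC u' s| ≤ ε ∧ |M.dH0 u s - M.dH0 u' s| ≤ ε ∧
        |M.dH1 u v s s' - M.dH1 u' v' s s'| ≤ ε ∧
        |M.dH2 u v s s' - M.dH2 u' v' s s'| ≤ ε := by
  intro ε hε
  obtain ⟨δ1, hδ1, hC⟩ := hreg.equicont_C ε hε
  obtain ⟨δ2, hδ2, hH0⟩ := hreg.equicont_H0 ε hε
  obtain ⟨δ3, hδ3, hH1⟩ := hreg.equicont_H1 (ε/2) (by positivity)
  obtain ⟨δ4, hδ4, hJ1⟩ := M.dH1_mod_snd hreg hP (ε/2) (by positivity)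
  obtain ⟨δ5, hδ5, hH2⟩ := hreg.equicont_H2 (ε/2) (by positivity)
  obtain ⟨δ6, hδ6, hJ2⟩ := M.dH2_mod_fst hreg hP (ε/2) (by positivity)
  refine ⟨min (min δ1 δ2) (min (min δ3 δ4) (min δ5 δ6)), by positivity, ?_⟩
  intro s s' u hu u' hu' v hv v' hv' huu hvv
  have hd1 : |u-u'| ≤ δ1 := huu.trans ((min_le_left _ _).trans (min_le_left _ _))
  have hd2 : |u-u'| ≤ δ2 := huu.trans ((min_le_left _ _).trans (min_le_right _ _))
  have hd3 : |u-u'| ≤ δ3 :=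
    huu.trans ((min_le_right _ _).trans ((min_le_left _ _).trans (min_le_left _ _)))
  have hd4 : |v-v'| ≤ δ4 :=
    hvv.trans ((min_le_right _ _).trans ((min_le_left _ _).trans (min_le_right _ _)))
  have hd5 : |v-v'| ≤ δ5 :=
    hvv.trans ((min_le_right _ _).trans ((min_le_right _ _).trans (min_le_left _ _)))
  have hd6 : |u-u'| ≤ δ6 :=
    huu.trans ((min_le_right _ _).trans ((min_le_right _ _).trans (min_le_right _ _)))
  refine ⟨hC s u hu.1 u' hu'.1 hd1, hH0 s u hu.1 u' hu'.1 hd2, ?_, ?_⟩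
  · calc |M.dH1 u v s s' - M.dH1 u' v' s s'|
        = |(M.dH1 u v s s' - M.dH1 u' v s s') + (M.dH1 u' v s s' - M.dH1 u' v' s s')| := by
          congr 1; ring
      _ ≤ |M.dH1 u v s s' - M.dH1 u' v s s'| + |M.dH1 u' v s s' - M.dH1 u' v' s s'| :=
          abs_add_le _ _
      _ ≤ ε/2 + ε/2 := add_le_add (hH1 s s' v hv u hu.1 u' hu'.1 hd3)
          (hJ1 s s' u' hu' v hv v' hv' hd4)
      _ = ε := by ring
  · calc |M.dH2 u v s s' - M.dH2 u' v' s s'|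
        = |(M.dH2 u v s s' - M.dH2 u' v s s') + (M.dH2 u' v s s' - M.dH2 u' v' s s')| := by
          congr 1; ring
      _ ≤ |M.dH2 u v s s' - M.dH2 u' v s s'| + |M.dH2 u' v s s' - M.dH2 u' v' s s'| :=
          abs_add_le _ _
      _ ≤ ε/2 + ε/2 := add_le_add (hJ2 s s' v hv u hu u' hu' hd6)
          (hH2 s s' u' hu' v hv.1 v' hv'.1 hd5)
      _ = ε := by ring

end Analysis

end ElecModel

namespace ElecModel

section Game

set_option linter.unusedSectionVars false

variable {S : Type*} {X0 : Type*} [Fintype S] [DecidableEq S] [Fintype X0] [DecidableEq X0]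
variable (M : ElecModel S X0)

lemma expectHist_sub (s0 : S) (F G : (ℕ → S) → ℝ) :
    M.expectHist s0 (fun h => F h - G h) = M.expectHist s0 F - M.expectHist s0 G := by
  unfold expectHist
  rw [← Finset.sum_sub_distrib]
  exact Finset.sum_congr rfl fun g _ => mul_sub _ _ _

lemma expectHist_smul (s0 : S) (a : ℝ) (F : (ℕ → S) → ℝ) :
    M.expectHist s0 (fun h => a * F h) = a * M.expectHist s0 F := by
  unfold expectHist
  rw [Finset.mul_sum]
  exact Finset.sum_congr rfl fun g _ => by ring

/-- The per-stage bound on the fluctuation of the per-capita demand. -/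
def Gsum (ν : OblStrategy M) (s0 : S) (m : ℕ) (ω : Fin m → X0) (h : ℕ → S) : ℝ :=
  ∑ t ∈ Finset.range (M.T + 1),
    (M.B + |∑ j : Fin m, (ν.act t (ω j) h - M.avgDemand ν s0 h t)|) / ((m : ℝ) + 1)

lemma Gsum_nonneg (ν : OblStrategy M) (s0 : S) (m : ℕ) (ω : Fin m → X0) (h : ℕ → S) :
    0 ≤ M.Gsum ν s0 m ω h :=
  Finset.sum_nonneg fun t _ =>
    div_nonneg (add_nonneg M.B_pos.le (abs_nonneg _)) (by positivity)

lemma avgDemand_mem (ν : OblStrategy M) (s0 : S) (h : ℕ → S) (t : ℕ) :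
    M.avgDemand ν s0 h t ∈ Set.Icc (0:ℝ) M.B := by
  unfold avgDemand
  constructor
  · exact Finset.sum_nonneg fun x _ => mul_nonneg (M.eta_nonneg _ _) (ν.act_mem t x h).1
  · calc ∑ x : X0, M.eta s0 x * ν.act t x h
        ≤ ∑ x : X0, M.eta s0 x * M.B := Finset.sum_le_sum fun x _ =>
          mul_le_mul_of_nonneg_left (ν.act_mem t x h).2 (M.eta_nonneg _ _)
      _ = M.B := by rw [← Finset.sum_mul, M.eta_sum, one_mul]

lemma aggDemandN_div_mem (m : ℕ) (κ : HistStrategy M) (ν : OblStrategy M) (x0 : X0)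
    (ω : Fin m → X0) (h : ℕ → S) (t : ℕ) :
    M.aggDemandN m κ ν x0 ω h t / ((m:ℝ)+1) ∈ Set.Icc (0:ℝ) M.B := by
  have hm1 : (0:ℝ) < (m:ℝ)+1 := by positivity
  have hnum1 : 0 ≤ M.aggDemandN m κ ν x0 ω h t := by
    unfold aggDemandN
    exact add_nonneg (M.iTraj_fst_mem m κ ν x0 ω h t).1
      (Finset.sum_nonneg fun j _ => (ν.act_mem t (ω j) h).1)
  have hnum2 : M.aggDemandN m κ ν x0 ω h t ≤ ((m:ℝ)+1) * M.B := by
    unfold aggDemandN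
    have h1 := (M.iTraj_fst_mem m κ ν x0 ω h t).2
    have h2 : ∑ j : Fin m, ν.act t (ω j) h ≤ (m:ℝ) * M.B := by
      calc ∑ j : Fin m, ν.act t (ω j) h ≤ ∑ _j : Fin m, M.B :=
          Finset.sum_le_sum fun j _ => (ν.act_mem t (ω j) h).2
        _ = (m:ℝ) * M.B := by
          rw [Finset.sum_const, Finset.card_univ, Fintype.card_fin, nsmul_eq_mul]
    linarith
  constructor
  · exact div_nonneg hnum1 hm1.le
  · rw [div_le_iff₀ hm1]
    linarith

lemma delta_bound (m : ℕ) (κ : HistStrategy M) (ν : OblStrategy M) (x0 : X0) (s0 : S)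
    (ω : Fin m → X0) (h : ℕ → S) (t : ℕ) :
    |M.aggDemandN m κ ν x0 ω h t / ((m:ℝ)+1) - M.avgDemand ν s0 h t|
      ≤ (M.B + |∑ j : Fin m, (ν.act t (ω j) h - M.avgDemand ν s0 h t)|) / ((m:ℝ)+1) := by
  have hm1 : (0:ℝ) < (m:ℝ)+1 := by positivity
  have hnum : M.aggDemandN m κ ν x0 ω h t - M.avgDemand ν s0 h t * ((m:ℝ)+1)
      = ((M.iTraj m κ ν x0 ω h t).1 - M.avgDemand ν s0 h t)
        + ∑ j : Fin m, (ν.act t (ω j) h - M.avgDemand ν s0 h t) := by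
    unfold aggDemandN
    rw [Finset.sum_sub_distrib, Finset.sum_const, Finset.card_univ, Fintype.card_fin,
      nsmul_eq_mul]
    ring
  have heq : M.aggDemandN m κ ν x0 ω h t / ((m:ℝ)+1) - M.avgDemand ν s0 h t
      = (((M.iTraj m κ ν x0 ω h t).1 - M.avgDemand ν s0 h t)
        + ∑ j : Fin m, (ν.act t (ω j) h - M.avgDemand ν s0 h t)) / ((m:ℝ)+1) := by
    rw [← hnum]
    field_simp
  rw [heq, abs_div, abs_of_pos hm1]
  refine (div_le_div_iff_of_pos_right hm1).mpr ?_
  have hX : |(M.iTraj m κ ν x0 ω h t).1 - M.avgDemand ν s0 h t| ≤ M.B := by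
    have h1 := M.iTraj_fst_mem m κ ν x0 ω h t
    have h2 := M.avgDemand_mem ν s0 h t
    rw [abs_le]
    exact ⟨by linarith [h1.1, h2.2], by linarith [h1.2, h2.1]⟩
  calc |((M.iTraj m κ ν x0 ω h t).1 - M.avgDemand ν s0 h t)
        + ∑ j : Fin m, (ν.act t (ω j) h - M.avgDemand ν s0 h t)|
      ≤ |(M.iTraj m κ ν x0 ω h t).1 - M.avgDemand ν s0 h t|
        + |∑ j : Fin m, (ν.act t (ω j) h - M.avgDemand ν s0 h t)| := abs_add_le _ _
    _ ≤ M.B + |∑ j : Fin m, (ν.act t (ω j) h - M.avgDemand ν s0 h t)| :=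
        add_le_add_left hX _

lemma payoff_gap {P Q : ℝ} (hreg : M.RegularAssumptions P Q) (hP : 0 ≤ P)
    (ν : OblStrategy M) (s0 : S) (x0 : X0) {ε δ : ℝ} (hε : 0 < ε) (hδ : 0 < δ)
    (hmod : ∀ s s' : S,
      ∀ u ∈ Set.Icc (0:ℝ) M.B, ∀ u' ∈ Set.Icc (0:ℝ) M.B,
      ∀ v ∈ Set.Icc (0:ℝ) M.B, ∀ v' ∈ Set.Icc (0:ℝ) M.B, |u - u'| ≤ δ → |v - v'| ≤ δ →
        |M.dC u s - M.dC u' s| ≤ ε ∧ |M.dH0 u s - M.dH0 u' s| ≤ ε ∧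
        |M.dH1 u v s s' - M.dH1 u' v' s s'| ≤ ε ∧
        |M.dH2 u v s s' - M.dH2 u' v' s s'| ≤ ε)
    (m : ℕ) (κ : HistStrategy M) (ω : Fin m → X0) (h : ℕ → S) :
    |M.iPayoff m κ ν x0 ω h - M.oblStageSum (M.inducedObl m κ ν x0 ω) ν s0 x0 h|
      ≤ 3 * M.B * (M.T + 1) * (ε + 2*P/δ * M.Gsum ν s0 m ω h) := by
  have hG0 : 0 ≤ M.Gsum ν s0 m ω h := M.Gsum_nonneg ν s0 m ω h
  have hPδG : 0 ≤ 2*P/δ * M.Gsum ν s0 m ω h :=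
    mul_nonneg (div_nonneg (by linarith) hδ.le) hG0
  have hE0 : 0 ≤ ε + 2*P/δ * M.Gsum ν s0 m ω h := by linarith
  have hAt : ∀ t, M.avgDemand ν s0 h t ∈ Set.Icc (0:ℝ) M.B :=
    fun t => M.avgDemand_mem ν s0 h t
  have hAh : ∀ t, M.aggDemandN m κ ν x0 ω h t / ((m:ℝ)+1) ∈ Set.Icc (0:ℝ) M.B :=
    fun t => M.aggDemandN_div_mem m κ ν x0 ω h t
  have hDbG : ∀ t, t ≤ M.T →
      (M.B + |∑ j : Fin m, (ν.act t (ω j) h - M.avgDemand ν s0 h t)|) / ((m:ℝ)+1)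
        ≤ M.Gsum ν s0 m ω h := by
    intro t ht
    unfold Gsum
    refine Finset.single_le_sum (f := fun t =>
      (M.B + |∑ j : Fin m, (ν.act t (ω j) h - M.avgDemand ν s0 h t)|) / ((m:ℝ)+1))
      (fun i _ => div_nonneg (add_nonneg M.B_pos.le (abs_nonneg _)) (by positivity))
      (Finset.mem_range.mpr (Nat.lt_succ_of_le ht))
  have hΔG : ∀ t, t ≤ M.T →
      |M.aggDemandN m κ ν x0 ω h t / ((m:ℝ)+1) - M.avgDemand ν s0 h t|
        ≤ M.Gsum ν s0 m ω h :=
    fun t ht => le_trans (M.delta_bound m κ ν x0 s0 ω h t) (hDbG t ht)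
  -- dispatcher
  have hdisp : ∀ (d1 d2 : ℝ) (t1 t2 : ℕ), t1 ≤ M.T → t2 ≤ M.T →
      (|M.aggDemandN m κ ν x0 ω h t1 / ((m:ℝ)+1) - M.avgDemand ν s0 h t1| ≤ δ →
       |M.aggDemandN m κ ν x0 ω h t2 / ((m:ℝ)+1) - M.avgDemand ν s0 h t2| ≤ δ →
        |d1 - d2| ≤ ε) →
      |d1 - d2| ≤ 2*P → |d1 - d2| ≤ ε + 2*P/δ * M.Gsum ν s0 m ω h := by
    intro d1 d2 t1 t2 ht1 ht2 hgood hbad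
    by_cases hc1 : |M.aggDemandN m κ ν x0 ω h t1 / ((m:ℝ)+1) - M.avgDemand ν s0 h t1| ≤ δ
    · by_cases hc2 : |M.aggDemandN m κ ν x0 ω h t2 / ((m:ℝ)+1) - M.avgDemand ν s0 h t2| ≤ δ
      · linarith [hgood hc1 hc2]
      · push_neg at hc2
        have hδG : δ ≤ M.Gsum ν s0 m ω h := le_trans hc2.le (hΔG t2 ht2)
        have hchain : 2*P ≤ 2*P/δ * M.Gsum ν s0 m ω h := by
          calc 2*P = 2*P/δ * δ := by field_simp
            _ ≤ 2*P/δ * M.Gsum ν s0 m ω h :=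
                mul_le_mul_of_nonneg_left hδG (div_nonneg (by linarith) hδ.le)
        linarith
    · push_neg at hc1
      have hδG : δ ≤ M.Gsum ν s0 m ω h := le_trans hc1.le (hΔG t1 ht1)
      have hchain : 2*P ≤ 2*P/δ * M.Gsum ν s0 m ω h := by
        calc 2*P = 2*P/δ * δ := by field_simp
          _ ≤ 2*P/δ * M.Gsum ν s0 m ω h :=
              mul_le_mul_of_nonneg_left hδG (div_nonneg (by linarith) hδ.le)
      linarith
  -- the three price bounds
  have hswap : ∀ t, |M.avgDemand ν s0 h t
      - M.aggDemandN m κ ν x0 ω h t / ((m:ℝ)+1)| ≤ δ →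
      |M.aggDemandN m κ ν x0 ω h t / ((m:ℝ)+1) - M.avgDemand ν s0 h t| ≤ δ := by
    intro t ht; rwa [abs_sub_comm] at ht
  have hself : ∀ t, |M.avgDemand ν s0 h t - M.avgDemand ν s0 h t| ≤ δ := by
    intro t; simpa using hδ.le
  have hpB : ∀ t, |M.pTil ν s0 h t - M.pN m κ ν x0 ω h t| ≤ 2*P := by
    intro t
    unfold pTil pN
    calc |M.dC (M.avgDemand ν s0 h t) (h t)
          - M.dC (M.aggDemandN m κ ν x0 ω h t / ((m:ℝ)+1)) (h t)|
        ≤ |M.dC (M.avgDemand ν s0 h t) (h t)|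
          + |M.dC (M.aggDemandN m κ ν x0 ω h t / ((m:ℝ)+1)) (h t)| := abs_sub _ _
      _ ≤ P + P := add_le_add (hreg.bound_C (h t) _ (hAt t).1) (hreg.bound_C (h t) _ (hAh t).1)
      _ = 2*P := by ring
  have hp : ∀ t, t ≤ M.T → |M.pTil ν s0 h t - M.pN m κ ν x0 ω h t|
      ≤ ε + 2*P/δ * M.Gsum ν s0 m ω h := by
    intro t ht
    refine hdisp _ _ t t ht ht (fun h1 _ => ?_) (hpB t)
    unfold pTil pN
    exact (hmod (h t) (h t) (M.avgDemand ν s0 h t) (hAt t) _ (hAh t)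
      (M.avgDemand ν s0 h t) (hAt t) (M.avgDemand ν s0 h t) (hAt t)
      (by rw [abs_sub_comm]; exact h1) (hself t)).1
  have hw : ∀ t, t ≤ M.T → |M.wTil ν s0 h t - M.wN m κ ν x0 ω h t|
      ≤ ε + 2*P/δ * M.Gsum ν s0 m ω h := by
    intro t ht
    rcases t with _ | t'
    · refine hdisp _ _ 0 0 (Nat.zero_le _) (Nat.zero_le _) (fun h1 _ => ?_) ?_
      · simp only [wTil, wN]
        exact (hmod (h 0) (h 0) (M.avgDemand ν s0 h 0) (hAt 0) _ (hAh 0)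
          (M.avgDemand ν s0 h 0) (hAt 0) (M.avgDemand ν s0 h 0) (hAt 0)
          (by rw [abs_sub_comm]; exact h1) (hself 0)).2.1
      · simp only [wTil, wN]
        calc |M.dH0 (M.avgDemand ν s0 h 0) (h 0)
              - M.dH0 (M.aggDemandN m κ ν x0 ω h 0 / ((m:ℝ)+1)) (h 0)|
            ≤ |M.dH0 (M.avgDemand ν s0 h 0) (h 0)|
              + |M.dH0 (M.aggDemandN m κ ν x0 ω h 0 / ((m:ℝ)+1)) (h 0)| := abs_sub _ _
          _ ≤ P + P := add_le_add (hreg.bound_H0 (h 0) _ (hAt 0).1)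
              (hreg.bound_H0 (h 0) _ (hAh 0).1)
          _ = 2*P := by ring
    · have ht' : t' ≤ M.T := le_trans (Nat.le_succ t') ht
      refine hdisp _ _ t' (t'+1) ht' ht (fun h1 h2 => ?_) ?_
      · simp only [wTil, wN]
        exact (hmod (h t') (h (t'+1)) (M.avgDemand ν s0 h t') (hAt t') _ (hAh t')
          (M.avgDemand ν s0 h (t'+1)) (hAt (t'+1)) _ (hAh (t'+1))
          (by rw [abs_sub_comm]; exact h1) (by rw [abs_sub_comm]; exact h2)).2.2.2
      · simp only [wTil, wN]
        calc |M.dH2 (M.avgDemand ν s0 h t') (M.avgDemand ν s0 h (t'+1)) (h t') (h (t'+1))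
              - M.dH2 (M.aggDemandN m κ ν x0 ω h t' / ((m:ℝ)+1))
                  (M.aggDemandN m κ ν x0 ω h (t'+1) / ((m:ℝ)+1)) (h t') (h (t'+1))|
            ≤ |M.dH2 (M.avgDemand ν s0 h t') (M.avgDemand ν s0 h (t'+1)) (h t') (h (t'+1))|
              + |M.dH2 (M.aggDemandN m κ ν x0 ω h t' / ((m:ℝ)+1))
                  (M.aggDemandN m κ ν x0 ω h (t'+1) / ((m:ℝ)+1)) (h t') (h (t'+1))| :=
              abs_sub _ _
          _ ≤ P + P := add_le_add
              (hreg.bound_H2 (h t') (h (t'+1)) _ (hAt t') _ (hAt (t'+1)).1)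
              (hreg.bound_H2 (h t') (h (t'+1)) _ (hAh t') _ (hAh (t'+1)).1)
          _ = 2*P := by ring
  have hq : ∀ t, t ≤ M.T → |M.qTil ν s0 h t - M.qN m κ ν x0 ω h t|
      ≤ ε + 2*P/δ * M.Gsum ν s0 m ω h := by
    intro t ht
    rcases t with _ | t'
    · simp only [qTil, qN]
      simpa using hE0
    · have ht' : t' ≤ M.T := le_trans (Nat.le_succ t') ht
      refine hdisp _ _ t' (t'+1) ht' ht (fun h1 h2 => ?_) ?_
      · simp only [qTil, qN]
        exact (hmod (h t') (h (t'+1)) (M.avgDemand ν s0 h t') (hAt t') _ (hAh t')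
          (M.avgDemand ν s0 h (t'+1)) (hAt (t'+1)) _ (hAh (t'+1))
          (by rw [abs_sub_comm]; exact h1) (by rw [abs_sub_comm]; exact h2)).2.2.1
      · simp only [qTil, qN]
        calc |M.dH1 (M.avgDemand ν s0 h t') (M.avgDemand ν s0 h (t'+1)) (h t') (h (t'+1))
              - M.dH1 (M.aggDemandN m κ ν x0 ω h t' / ((m:ℝ)+1))
                  (M.aggDemandN m κ ν x0 ω h (t'+1) / ((m:ℝ)+1)) (h t') (h (t'+1))|
            ≤ |M.dH1 (M.avgDemand ν s0 h t') (M.avgDemand ν s0 h (t'+1)) (h t') (h (t'+1))|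
              + |M.dH1 (M.aggDemandN m κ ν x0 ω h t' / ((m:ℝ)+1))
                  (M.aggDemandN m κ ν x0 ω h (t'+1) / ((m:ℝ)+1)) (h t') (h (t'+1))| :=
              abs_sub _ _
          _ ≤ P + P := add_le_add
              (hreg.bound_H1 (h t') (h (t'+1)) _ (hAt (t'+1)) _ (hAt t').1)
              (hreg.bound_H1 (h t') (h (t'+1)) _ (hAh (t'+1)) _ (hAh t').1)
          _ = 2*P := by ring
  -- decomposition of the payoff difference
  have hdiff : M.iPayoff m κ ν x0 ω h - M.oblStageSum (M.inducedObl m κ ν x0 ω) ν s0 x0 h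
      = ∑ t ∈ Finset.range (M.T+1),
          (((M.pTil ν s0 h t + M.wTil ν s0 h t)
              - (M.pN m κ ν x0 ω h t + M.wN m κ ν x0 ω h t)) * (M.iTraj m κ ν x0 ω h t).1
            + (M.qTil ν s0 h t - M.qN m κ ν x0 ω h t)
              * (if t = 0 then 0 else (M.iTraj m κ ν x0 ω h (t-1)).1)) := by
    unfold iPayoff oblStageSum
    simp only [inducedObl]
    rw [← Finset.sum_sub_distrib]
    refine Finset.sum_congr rfl fun t _ => ?_
    rw [← M.iTraj_snd m κ ν x0 ω h t]
    ring
  rw [hdiff]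
  calc |∑ t ∈ Finset.range (M.T+1),
        (((M.pTil ν s0 h t + M.wTil ν s0 h t)
            - (M.pN m κ ν x0 ω h t + M.wN m κ ν x0 ω h t)) * (M.iTraj m κ ν x0 ω h t).1
          + (M.qTil ν s0 h t - M.qN m κ ν x0 ω h t)
            * (if t = 0 then 0 else (M.iTraj m κ ν x0 ω h (t-1)).1))|
      ≤ ∑ t ∈ Finset.range (M.T+1),
        |(((M.pTil ν s0 h t + M.wTil ν s0 h t)
            - (M.pN m κ ν x0 ω h t + M.wN m κ ν x0 ω h t)) * (M.iTraj m κ ν x0 ω h t).1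
          + (M.qTil ν s0 h t - M.qN m κ ν x0 ω h t)
            * (if t = 0 then 0 else (M.iTraj m κ ν x0 ω h (t-1)).1))| :=
        Finset.abs_sum_le_sum_abs _ _
    _ ≤ ∑ _t ∈ Finset.range (M.T+1),
          3 * M.B * (ε + 2*P/δ * M.Gsum ν s0 m ω h) := by
        refine Finset.sum_le_sum fun t ht => ?_
        have htT : t ≤ M.T := Nat.lt_succ_iff.mp (Finset.mem_range.mp ht)
        have ha : |(M.iTraj m κ ν x0 ω h t).1| ≤ M.B := by
          have := M.iTraj_fst_mem m κ ν x0 ω h t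
          rw [abs_le]; exact ⟨by linarith [this.1, M.B_pos.le], this.2⟩
        have hprev : |(if t = 0 then (0:ℝ) else (M.iTraj m κ ν x0 ω h (t-1)).1)| ≤ M.B := by
          split
          · simpa using M.B_pos.le
          · have := M.iTraj_fst_mem m κ ν x0 ω h (t-1)
            rw [abs_le]; exact ⟨by linarith [this.1, M.B_pos.le], this.2⟩
        have hX : |(M.pTil ν s0 h t + M.wTil ν s0 h t)
            - (M.pN m κ ν x0 ω h t + M.wN m κ ν x0 ω h t)|
            ≤ 2 * (ε + 2*P/δ * M.Gsum ν s0 m ω h) := by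
          calc |(M.pTil ν s0 h t + M.wTil ν s0 h t)
              - (M.pN m κ ν x0 ω h t + M.wN m κ ν x0 ω h t)|
              = |(M.pTil ν s0 h t - M.pN m κ ν x0 ω h t)
                + (M.wTil ν s0 h t - M.wN m κ ν x0 ω h t)| := by congr 1; ring
            _ ≤ |M.pTil ν s0 h t - M.pN m κ ν x0 ω h t|
                + |M.wTil ν s0 h t - M.wN m κ ν x0 ω h t| := abs_add_le _ _
            _ ≤ 2 * (ε + 2*P/δ * M.Gsum ν s0 m ω h) := by
                have := hp t htT; have := hw t htT; linarith [hp t htT, hw t htT]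
        calc |(((M.pTil ν s0 h t + M.wTil ν s0 h t)
              - (M.pN m κ ν x0 ω h t + M.wN m κ ν x0 ω h t)) * (M.iTraj m κ ν x0 ω h t).1
            + (M.qTil ν s0 h t - M.qN m κ ν x0 ω h t)
              * (if t = 0 then 0 else (M.iTraj m κ ν x0 ω h (t-1)).1))|
            ≤ |((M.pTil ν s0 h t + M.wTil ν s0 h t)
              - (M.pN m κ ν x0 ω h t + M.wN m κ ν x0 ω h t))| * |(M.iTraj m κ ν x0 ω h t).1|
            + |M.qTil ν s0 h t - M.qN m κ ν x0 ω h t|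
              * |(if t = 0 then (0:ℝ) else (M.iTraj m κ ν x0 ω h (t-1)).1)| := by
              refine le_trans (abs_add_le _ _) ?_
              rw [abs_mul, abs_mul]
          _ ≤ (2 * (ε + 2*P/δ * M.Gsum ν s0 m ω h)) * M.B
              + (ε + 2*P/δ * M.Gsum ν s0 m ω h) * M.B := by
              refine add_le_add (mul_le_mul hX ha (abs_nonneg _) (by linarith))
                (mul_le_mul (hq t htT) hprev (abs_nonneg _) hE0)
          _ = 3 * M.B * (ε + 2*P/δ * M.Gsum ν s0 m ω h) := by ring
    _ = 3 * M.B * (M.T + 1) * (ε + 2*P/δ * M.Gsum ν s0 m ω h) := by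
        rw [Finset.sum_const, Finset.card_range, nsmul_eq_mul]
        push_cast
        ring

end Game

end ElecModel

namespace ElecModel

section Final

set_option linter.unusedSectionVars false

variable {S : Type*} {X0 : Type*} [Fintype S] [DecidableEq S] [Fintype X0] [DecidableEq X0]
variable (M : ElecModel S X0)

lemma exp_Gsum_le (ν : OblStrategy M) (s0 : S) (m : ℕ) :
    ∑ ω : Fin m → X0, (∏ j, M.eta s0 (ω j)) * M.expectHist s0 (fun h => M.Gsum ν s0 m ω h)
      ≤ (((M.T:ℝ))+1) * (M.B * (1 + Real.sqrt m)) / ((m:ℝ)+1) := by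
  have hm1 : (0:ℝ) < (m:ℝ)+1 := by positivity
  have hB := M.B_pos
  -- swap the two expectations
  have hswap : ∑ ω : Fin m → X0, (∏ j, M.eta s0 (ω j))
        * M.expectHist s0 (fun h => M.Gsum ν s0 m ω h)
      = M.expectHist s0 (fun h => ∑ ω : Fin m → X0,
          (∏ j, M.eta s0 (ω j)) * M.Gsum ν s0 m ω h) := by
    unfold expectHist
    have h1 : ∀ ω : Fin m → X0, (∏ j, M.eta s0 (ω j))
          * ∑ g : Fin (M.T+1) → S,
              M.histProb s0 (M.extendHist g) * M.Gsum ν s0 m ω (M.extendHist g)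
        = ∑ g : Fin (M.T+1) → S, (∏ j, M.eta s0 (ω j))
            * (M.histProb s0 (M.extendHist g) * M.Gsum ν s0 m ω (M.extendHist g)) :=
      fun ω => Finset.mul_sum _ _ _
    rw [Finset.sum_congr rfl (fun ω _ => h1 ω), Finset.sum_comm]
    refine Finset.sum_congr rfl fun g _ => ?_
    rw [Finset.mul_sum]
    exact Finset.sum_congr rfl fun ω _ => by ring
  rw [hswap]
  have hinner : ∀ h : ℕ → S, ∑ ω : Fin m → X0,
      (∏ j, M.eta s0 (ω j)) * M.Gsum ν s0 m ω h
        ≤ (((M.T:ℝ))+1) * (M.B * (1 + Real.sqrt m)) / ((m:ℝ)+1) := by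
    intro h
    have hper : ∀ t : ℕ, ∑ ω : Fin m → X0, (∏ j, M.eta s0 (ω j))
        * ((M.B + |∑ j : Fin m, (ν.act t (ω j) h - M.avgDemand ν s0 h t)|) / ((m:ℝ)+1))
        ≤ M.B * (1 + Real.sqrt m) / ((m:ℝ)+1) := by
      intro t
      have hmean : ∑ x : X0, M.eta s0 x * (ν.act t x h - M.avgDemand ν s0 h t) = 0 := by
        simp only [mul_sub]
        rw [Finset.sum_sub_distrib, ← Finset.sum_mul, M.eta_sum, one_mul]
        exact sub_eq_zero.mpr rfl
      have hbY : ∀ x : X0, |ν.act t x h - M.avgDemand ν s0 h t| ≤ M.B := by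
        intro x
        have h1 := ν.act_mem t x h
        have h2 := M.avgDemand_mem ν s0 h t
        rw [abs_le]
        exact ⟨by linarith [h1.1, h2.2], by linarith [h1.2, h2.1]⟩
      have hstat := M.exp_abs_le s0 m (fun x => ν.act t x h - M.avgDemand ν s0 h t)
        hmean hbY M.B_pos
      calc ∑ ω : Fin m → X0, (∏ j, M.eta s0 (ω j))
          * ((M.B + |∑ j : Fin m, (ν.act t (ω j) h - M.avgDemand ν s0 h t)|) / ((m:ℝ)+1))
          = (∑ ω : Fin m → X0, ((∏ j, M.eta s0 (ω j)) * M.B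
              + (∏ j, M.eta s0 (ω j))
                * |∑ j : Fin m, (ν.act t (ω j) h - M.avgDemand ν s0 h t)|)) / ((m:ℝ)+1) := by
            rw [Finset.sum_div]
            exact Finset.sum_congr rfl fun ω _ => by ring
        _ = ((∑ ω : Fin m → X0, (∏ j, M.eta s0 (ω j))) * M.B
              + ∑ ω : Fin m → X0, (∏ j, M.eta s0 (ω j))
                * |∑ j : Fin m, (ν.act t (ω j) h - M.avgDemand ν s0 h t)|) / ((m:ℝ)+1) := by
            rw [Finset.sum_add_distrib, Finset.sum_mul]
        _ ≤ (1 * M.B + M.B * Real.sqrt m) / ((m:ℝ)+1) := by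
            rw [M.sum_pi_eta s0 m]
            exact (div_le_div_iff_of_pos_right hm1).mpr (by linarith [hstat])
        _ = M.B * (1 + Real.sqrt m) / ((m:ℝ)+1) := by ring
    unfold Gsum
    calc ∑ ω : Fin m → X0, (∏ j, M.eta s0 (ω j)) * ∑ t ∈ Finset.range (M.T + 1),
          (M.B + |∑ j : Fin m, (ν.act t (ω j) h - M.avgDemand ν s0 h t)|) / ((m:ℝ)+1)
        = ∑ t ∈ Finset.range (M.T + 1), ∑ ω : Fin m → X0, (∏ j, M.eta s0 (ω j))
            * ((M.B + |∑ j : Fin m, (ν.act t (ω j) h - M.avgDemand ν s0 h t)|) / ((m:ℝ)+1)) := by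
          rw [Finset.sum_congr rfl fun ω (_ : ω ∈ Finset.univ) => Finset.mul_sum
            (Finset.range (M.T+1)) (fun t => (M.B + |∑ j : Fin m,
              (ν.act t (ω j) h - M.avgDemand ν s0 h t)|) / ((m:ℝ)+1)) (∏ j, M.eta s0 (ω j))]
          exact Finset.sum_comm
      _ ≤ ∑ _t ∈ Finset.range (M.T + 1), M.B * (1 + Real.sqrt m) / ((m:ℝ)+1) :=
          Finset.sum_le_sum fun t _ => hper t
      _ = (((M.T:ℝ))+1) * (M.B * (1 + Real.sqrt m)) / ((m:ℝ)+1) := by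
          rw [Finset.sum_const, Finset.card_range, nsmul_eq_mul]
          push_cast
          ring
  calc M.expectHist s0 (fun h => ∑ ω : Fin m → X0,
        (∏ j, M.eta s0 (ω j)) * M.Gsum ν s0 m ω h)
      ≤ M.expectHist s0 (fun _ => (((M.T:ℝ))+1) * (M.B * (1 + Real.sqrt m)) / ((m:ℝ)+1)) :=
        M.expectHist_mono s0 hinner
    _ = (((M.T:ℝ))+1) * (M.B * (1 + Real.sqrt m)) / ((m:ℝ)+1) := M.expectHist_const s0 _

lemma Vn_diff_le {P Q : ℝ} (hreg : M.RegularAssumptions P Q) (hP : 0 ≤ P)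
    (ν : OblStrategy M) (hDOE : M.IsDOE ν) (s0 : S) (x0 : X0) {ε δ : ℝ}
    (hε : 0 < ε) (hδ : 0 < δ)
    (hmod : ∀ s s' : S,
      ∀ u ∈ Set.Icc (0:ℝ) M.B, ∀ u' ∈ Set.Icc (0:ℝ) M.B,
      ∀ v ∈ Set.Icc (0:ℝ) M.B, ∀ v' ∈ Set.Icc (0:ℝ) M.B, |u - u'| ≤ δ → |v - v'| ≤ δ →
        |M.dC u s - M.dC u' s| ≤ ε ∧ |M.dH0 u s - M.dH0 u' s| ≤ ε ∧
        |M.dH1 u v s s' - M.dH1 u' v' s s'| ≤ ε ∧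
        |M.dH2 u v s s' - M.dH2 u' v' s s'| ≤ ε)
    (m : ℕ) (κ : HistStrategy M) :
    M.Vn m κ ν x0 s0 - M.Vn m ν.toHist ν x0 s0
      ≤ 2 * (3 * M.B * (M.T+1))
          * (ε + 2*P/δ * ((((M.T:ℝ))+1) * (M.B * (1 + Real.sqrt m)) / ((m:ℝ)+1))) := by
  have hB := M.B_pos
  have hKnn : 0 ≤ (((M.T:ℝ))+1) * (M.B * (1 + Real.sqrt m)) / ((m:ℝ)+1) := by
    have := Real.sqrt_nonneg (m:ℝ)
    positivity
  -- generic upper bound per history strategy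
  have hbound : ∀ (κ' : HistStrategy M) (ω : Fin m → X0) (h : ℕ → S),
      |M.iPayoff m κ' ν x0 ω h - M.oblStageSum (M.inducedObl m κ' ν x0 ω) ν s0 x0 h|
        ≤ 3 * M.B * (M.T + 1) * (ε + 2*P/δ * M.Gsum ν s0 m ω h) :=
    fun κ' ω h => M.payoff_gap hreg hP ν s0 x0 hε hδ hmod m κ' ω h
  have hup : M.Vn m κ ν x0 s0 ≤ M.oblValue ν ν x0 s0
      + ∑ ω : Fin m → X0, (∏ j, M.eta s0 (ω j)) * M.expectHist s0
          (fun h => 3 * M.B * (M.T + 1) * (ε + 2*P/δ * M.Gsum ν s0 m ω h)) := by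
    have hω : ∀ ω : Fin m → X0,
        M.expectHist s0 (fun h => M.iPayoff m κ ν x0 ω h)
          ≤ M.oblValue ν ν x0 s0 + M.expectHist s0
              (fun h => 3 * M.B * (M.T + 1) * (ε + 2*P/δ * M.Gsum ν s0 m ω h)) := by
      intro ω
      have h1 : M.expectHist s0 (fun h => M.iPayoff m κ ν x0 ω h)
          ≤ M.expectHist s0 (fun h =>
              M.oblStageSum (M.inducedObl m κ ν x0 ω) ν s0 x0 h
                + 3 * M.B * (M.T + 1) * (ε + 2*P/δ * M.Gsum ν s0 m ω h)) := by
        refine M.expectHist_mono s0 fun h => ?_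
        have h2 := abs_le.mp (hbound κ ω h)
        linarith [h2.2]
      rw [M.expectHist_add s0] at h1
      have h3 : M.expectHist s0
          (fun h => M.oblStageSum (M.inducedObl m κ ν x0 ω) ν s0 x0 h)
          = M.oblValue (M.inducedObl m κ ν x0 ω) ν x0 s0 := rfl
      rw [h3] at h1
      exact le_trans h1 (add_le_add_left (hDOE (M.inducedObl m κ ν x0 ω) x0 s0) _)
    calc M.Vn m κ ν x0 s0
        = ∑ ω : Fin m → X0, (∏ j, M.eta s0 (ω j))
            * M.expectHist s0 (fun h => M.iPayoff m κ ν x0 ω h) := rfl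
      _ ≤ ∑ ω : Fin m → X0, (∏ j, M.eta s0 (ω j))
            * (M.oblValue ν ν x0 s0 + M.expectHist s0
                (fun h => 3 * M.B * (M.T + 1) * (ε + 2*P/δ * M.Gsum ν s0 m ω h))) :=
          Finset.sum_le_sum fun ω _ =>
            mul_le_mul_of_nonneg_left (hω ω) (M.pi_eta_nonneg s0 m ω)
      _ = (∑ ω : Fin m → X0, (∏ j, M.eta s0 (ω j))) * M.oblValue ν ν x0 s0
          + ∑ ω : Fin m → X0, (∏ j, M.eta s0 (ω j)) * M.expectHist s0
              (fun h => 3 * M.B * (M.T + 1) * (ε + 2*P/δ * M.Gsum ν s0 m ω h)) := by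
          rw [Finset.sum_congr rfl (fun ω (_ : ω ∈ Finset.univ) => mul_add
            (∏ j, M.eta s0 (ω j)) (M.oblValue ν ν x0 s0) _), Finset.sum_add_distrib,
            Finset.sum_mul]
      _ = M.oblValue ν ν x0 s0
          + ∑ ω : Fin m → X0, (∏ j, M.eta s0 (ω j)) * M.expectHist s0
              (fun h => 3 * M.B * (M.T + 1) * (ε + 2*P/δ * M.Gsum ν s0 m ω h)) := by
          rw [M.sum_pi_eta s0 m, one_mul]
  have hlo : M.oblValue ν ν x0 s0
      - ∑ ω : Fin m → X0, (∏ j, M.eta s0 (ω j)) * M.expectHist s0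
          (fun h => 3 * M.B * (M.T + 1) * (ε + 2*P/δ * M.Gsum ν s0 m ω h))
      ≤ M.Vn m ν.toHist ν x0 s0 := by
    have hω : ∀ ω : Fin m → X0,
        M.oblValue ν ν x0 s0 - M.expectHist s0
            (fun h => 3 * M.B * (M.T + 1) * (ε + 2*P/δ * M.Gsum ν s0 m ω h))
          ≤ M.expectHist s0 (fun h => M.iPayoff m ν.toHist ν x0 ω h) := by
      intro ω
      have hcongr : ∀ h : ℕ → S,
          M.oblStageSum (M.inducedObl m ν.toHist ν x0 ω) ν s0 x0 h
            = M.oblStageSum ν ν s0 x0 h := by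
        intro h
        exact M.oblStageSum_eq_of_act_eq _ ν ν s0 x0 h
          (fun t => congrArg Prod.fst (M.iTraj_toHist m ν x0 ω h t))
      have h1 : M.expectHist s0 (fun h =>
            M.oblStageSum ν ν s0 x0 h
              - 3 * M.B * (M.T + 1) * (ε + 2*P/δ * M.Gsum ν s0 m ω h))
          ≤ M.expectHist s0 (fun h => M.iPayoff m ν.toHist ν x0 ω h) := by
        refine M.expectHist_mono s0 fun h => ?_
        have h2 := abs_le.mp (hbound ν.toHist ω h)
        rw [hcongr h] at h2
        linarith [h2.1]
      rw [M.expectHist_sub s0] at h1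
      have h3 : M.expectHist s0 (fun h => M.oblStageSum ν ν s0 x0 h)
          = M.oblValue ν ν x0 s0 := rfl
      rw [h3] at h1
      exact h1
    calc M.oblValue ν ν x0 s0
        - ∑ ω : Fin m → X0, (∏ j, M.eta s0 (ω j)) * M.expectHist s0
            (fun h => 3 * M.B * (M.T + 1) * (ε + 2*P/δ * M.Gsum ν s0 m ω h))
        = ∑ ω : Fin m → X0, (∏ j, M.eta s0 (ω j))
            * (M.oblValue ν ν x0 s0 - M.expectHist s0
                (fun h => 3 * M.B * (M.T + 1) * (ε + 2*P/δ * M.Gsum ν s0 m ω h))) := by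
          have hfactor : ∀ ω : Fin m → X0, (∏ j, M.eta s0 (ω j))
              * (M.oblValue ν ν x0 s0 - M.expectHist s0
                  (fun h => 3 * M.B * (M.T + 1) * (ε + 2*P/δ * M.Gsum ν s0 m ω h)))
              = (∏ j, M.eta s0 (ω j)) * M.oblValue ν ν x0 s0
                - (∏ j, M.eta s0 (ω j)) * M.expectHist s0
                    (fun h => 3 * M.B * (M.T + 1) * (ε + 2*P/δ * M.Gsum ν s0 m ω h)) :=
            fun ω => mul_sub _ _ _
          symm
          rw [Finset.sum_congr rfl fun ω (_ : ω ∈ Finset.univ) => hfactor ω,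
            Finset.sum_sub_distrib, ← Finset.sum_mul, M.sum_pi_eta s0 m, one_mul]
      _ ≤ ∑ ω : Fin m → X0, (∏ j, M.eta s0 (ω j))
            * M.expectHist s0 (fun h => M.iPayoff m ν.toHist ν x0 ω h) :=
          Finset.sum_le_sum fun ω _ =>
            mul_le_mul_of_nonneg_left (hω ω) (M.pi_eta_nonneg s0 m ω)
      _ = M.Vn m ν.toHist ν x0 s0 := rfl
  -- evaluate the error sum
  have herr : ∑ ω : Fin m → X0, (∏ j, M.eta s0 (ω j)) * M.expectHist s0
        (fun h => 3 * M.B * (M.T + 1) * (ε + 2*P/δ * M.Gsum ν s0 m ω h))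
      ≤ 3 * M.B * (M.T+1)
          * (ε + 2*P/δ * ((((M.T:ℝ))+1) * (M.B * (1 + Real.sqrt m)) / ((m:ℝ)+1))) := by
    have hEb : ∀ ω : Fin m → X0, M.expectHist s0
        (fun h => 3 * M.B * (M.T + 1) * (ε + 2*P/δ * M.Gsum ν s0 m ω h))
        = 3 * M.B * (M.T + 1) * ε + (3 * M.B * (M.T + 1) * (2*P/δ))
            * M.expectHist s0 (fun h => M.Gsum ν s0 m ω h) := by
      intro ω
      have h1 : (fun h => 3 * M.B * (M.T + 1) * (ε + 2*P/δ * M.Gsum ν s0 m ω h))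
          = fun h => (3 * M.B * (M.T + 1) * ε)
              + (3 * M.B * (M.T + 1) * (2*P/δ)) * M.Gsum ν s0 m ω h :=
        funext fun h => by ring
      rw [h1, M.expectHist_add s0 (fun _ => 3 * M.B * (M.T + 1) * ε)
        (fun h => (3 * M.B * (M.T + 1) * (2*P/δ)) * M.Gsum ν s0 m ω h),
        M.expectHist_const s0, M.expectHist_smul s0]
    rw [Finset.sum_congr rfl (fun ω _ => by rw [hEb ω])]
    have hsplit : ∑ ω : Fin m → X0, (∏ j, M.eta s0 (ω j))
        * (3 * M.B * (M.T + 1) * ε + (3 * M.B * (M.T + 1) * (2*P/δ))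
            * M.expectHist s0 (fun h => M.Gsum ν s0 m ω h))
        = (∑ ω : Fin m → X0, (∏ j, M.eta s0 (ω j))) * (3 * M.B * (M.T + 1) * ε)
          + (3 * M.B * (M.T + 1) * (2*P/δ)) * ∑ ω : Fin m → X0,
              (∏ j, M.eta s0 (ω j)) * M.expectHist s0 (fun h => M.Gsum ν s0 m ω h) := by
      rw [Finset.sum_mul, Finset.mul_sum, ← Finset.sum_add_distrib]
      exact Finset.sum_congr rfl fun ω _ => by ring
    rw [hsplit, M.sum_pi_eta s0 m, one_mul]
    have hc2 : (0:ℝ) ≤ 3 * M.B * (M.T + 1) * (2*P/δ) := by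
      have h2 : (0:ℝ) ≤ 2*P/δ := div_nonneg (by linarith) hδ.le
      have h3 : (0:ℝ) ≤ 3 * M.B * (M.T+1) := by positivity
      exact mul_nonneg h3 h2
    have h4 := mul_le_mul_of_nonneg_left (M.exp_Gsum_le ν s0 m) hc2
    have : (3:ℝ) * M.B * (↑M.T + 1) * ε + 3 * M.B * (↑M.T + 1) * (2 * P / δ) *
        ((↑M.T + 1) * (M.B * (1 + Real.sqrt ↑m)) / (↑m + 1))
        = 3 * M.B * (M.T+1)
          * (ε + 2*P/δ * ((((M.T:ℝ))+1) * (M.B * (1 + Real.sqrt m)) / ((m:ℝ)+1))) := by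
      ring
    linarith [h4]
  linarith [hup, hlo, herr]

lemma abs_Vn_le {P Q : ℝ} (hreg : M.RegularAssumptions P Q) (ν : OblStrategy M)
    (m : ℕ) (κ : HistStrategy M) (x0 : X0) (s0 : S) :
    |M.Vn m κ ν x0 s0| ≤ ((M.T:ℝ)+1) * (Q + 3*P*M.B) := by
  have hQ0 : 0 ≤ Q :=
    le_trans (hreg.U_bounds 0 x0 0 s0 0).1 (hreg.U_bounds 0 x0 0 s0 0).2
  have hP0 : 0 ≤ P := le_trans (abs_nonneg _) (hreg.bound_C s0 0 (Set.mem_Ici.mpr le_rfl))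
  have hB := M.B_pos
  have hstage : ∀ (ω : Fin m → X0) (h : ℕ → S) (t : ℕ),
      |M.U t x0 (M.iTraj m κ ν x0 ω h t).2 (h t) (M.iTraj m κ ν x0 ω h t).1
        - (M.pN m κ ν x0 ω h t + M.wN m κ ν x0 ω h t) * (M.iTraj m κ ν x0 ω h t).1
        - M.qN m κ ν x0 ω h t * (if t = 0 then 0 else (M.iTraj m κ ν x0 ω h (t-1)).1)|
      ≤ Q + 3*P*M.B := by
    intro ω h t
    have hU := hreg.U_bounds t x0 (M.iTraj m κ ν x0 ω h t).2 (h t) (M.iTraj m κ ν x0 ω h t).1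
    have ha := M.iTraj_fst_mem m κ ν x0 ω h t
    have hAh : ∀ τ, M.aggDemandN m κ ν x0 ω h τ / ((m:ℝ)+1) ∈ Set.Icc (0:ℝ) M.B :=
      fun τ => M.aggDemandN_div_mem m κ ν x0 ω h τ
    have hpP : |M.pN m κ ν x0 ω h t| ≤ P := by
      unfold pN; exact hreg.bound_C (h t) _ (hAh t).1
    have hwP : |M.wN m κ ν x0 ω h t| ≤ P := by
      rcases t with _ | t'
      · simp only [wN]; exact hreg.bound_H0 (h 0) _ (hAh 0).1
      · simp only [wN]; exact hreg.bound_H2 (h t') (h (t'+1)) _ (hAh t') _ (hAh (t'+1)).1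
    have hqP : |M.qN m κ ν x0 ω h t| ≤ P := by
      rcases t with _ | t'
      · simp only [qN]; simpa using hP0
      · simp only [qN]; exact hreg.bound_H1 (h t') (h (t'+1)) _ (hAh (t'+1)) _ (hAh t').1
    have hprev : |(if t = 0 then (0:ℝ) else (M.iTraj m κ ν x0 ω h (t-1)).1)| ≤ M.B := by
      split
      · simpa using hB.le
      · have := M.iTraj_fst_mem m κ ν x0 ω h (t-1)
        rw [abs_le]; exact ⟨by linarith [this.1], this.2⟩
    have haB : |(M.iTraj m κ ν x0 ω h t).1| ≤ M.B := by
      rw [abs_le]; exact ⟨by linarith [ha.1], ha.2⟩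
    have hUQ : |M.U t x0 (M.iTraj m κ ν x0 ω h t).2 (h t) (M.iTraj m κ ν x0 ω h t).1| ≤ Q := by
      rw [abs_le]; exact ⟨by linarith [hU.1], hU.2⟩
    have h1 : |(M.pN m κ ν x0 ω h t + M.wN m κ ν x0 ω h t) * (M.iTraj m κ ν x0 ω h t).1|
        ≤ 2*P*M.B := by
      rw [abs_mul]
      refine mul_le_mul (le_trans (abs_add_le _ _) (by linarith)) haB (abs_nonneg _) (by linarith)
    have h2 : |M.qN m κ ν x0 ω h t * (if t = 0 then (0:ℝ) else (M.iTraj m κ ν x0 ω h (t-1)).1)|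
        ≤ P*M.B := by
      rw [abs_mul]; exact mul_le_mul hqP hprev (abs_nonneg _) hP0
    have habs : ∀ x y z : ℝ, |x| ≤ Q → |y| ≤ 2*P*M.B → |z| ≤ P*M.B →
        |x - y - z| ≤ Q + 3*P*M.B := by
      intro x y z hx hy hz
      calc |x - y - z| ≤ |x - y| + |z| := abs_sub _ _
        _ ≤ |x| + |y| + |z| := by linarith [abs_sub x y]
        _ ≤ Q + 2*P*M.B + P*M.B := by linarith
        _ = Q + 3*P*M.B := by ring
    exact habs _ _ _ hUQ h1 h2
  have hib : ∀ (ω : Fin m → X0) (h : ℕ → S),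
      |M.iPayoff m κ ν x0 ω h| ≤ ((M.T:ℝ)+1) * (Q+3*P*M.B) := by
    intro ω h
    unfold iPayoff
    refine le_trans (Finset.abs_sum_le_sum_abs _ _) ?_
    refine le_trans (Finset.sum_le_sum fun t _ => hstage ω h t) ?_
    rw [Finset.sum_const, Finset.card_range, nsmul_eq_mul]
    refine le_of_eq ?_
    push_cast
    ring
  unfold Vn
  refine le_trans (Finset.abs_sum_le_sum_abs _ _) ?_
  have hstep : ∀ ω : Fin m → X0,
      |(∏ j, M.eta s0 (ω j)) * M.expectHist s0 (fun h => M.iPayoff m κ ν x0 ω h)|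
        ≤ (∏ j, M.eta s0 (ω j)) * (((M.T:ℝ)+1) * (Q+3*P*M.B)) := by
    intro ω
    rw [abs_mul, abs_of_nonneg (M.pi_eta_nonneg s0 m ω)]
    exact mul_le_mul_of_nonneg_left (M.abs_expectHist_le s0 (hib ω)) (M.pi_eta_nonneg s0 m ω)
  refine le_trans (Finset.sum_le_sum fun ω _ => hstep ω) ?_
  rw [← Finset.sum_mul, M.sum_pi_eta s0 m, one_mul]

end Final

end ElecModel

open ElecModel in
/-- Theorem 1 of the paper. Every Dynamic Oblivious Equilibrium has the
Asymptotic Markov Equilibrium property: for every initial exogenous state `s0`, every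
initial consumer type `x0`, and every sequence of history-dependent strategies `κ n`
(for the game with `n` consumers, i.e. `n - 1` consumers other than `i`),
`limsup_{n→∞} (Vⁿ(x0, s0 ∣ κ n, ν) - Vⁿ(x0, s0 ∣ ν, ν)) ≤ 0`. -/
theorem doe_has_ame_property
    {S : Type*} {X0 : Type*} [Fintype S] [DecidableEq S] [Fintype X0] [DecidableEq X0]
    (M : ElecModel S X0) (P Q : ℝ)
    (hreg : RegularAssumptions M P Q)
    (ν : OblStrategy M) (hDOE : M.IsDOE ν) :
    ∀ (s0 : S) (x0 : X0) (κ : ℕ → HistStrategy M),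
      Filter.limsup
        (fun n : ℕ =>
          M.Vn (n - 1) (κ n) ν x0 s0 - M.Vn (n - 1) ν.toHist ν x0 s0)
        Filter.atTop ≤ 0 := by
  intro s0 x0 κ
  have hP : 0 ≤ P := le_trans (abs_nonneg _) (hreg.bound_C s0 0 (Set.mem_Ici.mpr le_rfl))
  have hB := M.B_pos
  -- the sequence is bounded above, hence cobounded
  have hub : ∀ n : ℕ, -(2 * (((M.T:ℝ)+1) * (Q + 3*P*M.B)))
      ≤ M.Vn (n-1) (κ n) ν x0 s0 - M.Vn (n-1) ν.toHist ν x0 s0 := by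
    intro n
    have h1 := abs_le.mp (M.abs_Vn_le hreg ν (n-1) (κ n) x0 s0)
    have h2 := abs_le.mp (M.abs_Vn_le hreg ν (n-1) ν.toHist x0 s0)
    linarith [h1.1, h2.2]
  have hcb : Filter.IsCoboundedUnder (· ≤ ·) Filter.atTop
      (fun n : ℕ => M.Vn (n-1) (κ n) ν x0 s0 - M.Vn (n-1) ν.toHist ν x0 s0) :=
    Filter.isCoboundedUnder_le_of_le Filter.atTop hub
  refine le_of_forall_pos_le_add fun ε₀ hε₀ => ?_
  set c1 : ℝ := 2 * (3 * M.B * ((M.T:ℝ)+1)) with hc1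
  have hc1pos : 0 < c1 := by
    rw [hc1]
    exact mul_pos two_pos (mul_pos (mul_pos (by norm_num) hB) (by positivity))
  have hεc : 0 < ε₀/(2*c1) := div_pos hε₀ (by linarith)
  obtain ⟨δ, hδ, hmod⟩ := M.price_mod hreg hP (ε₀/(2*c1)) hεc
  set C3 : ℝ := c1 * (2*P/δ) * (((M.T:ℝ)+1)*M.B) with hC3
  have hC3nn : 0 ≤ C3 := by
    rw [hC3]
    have h1 : (0:ℝ) ≤ 2*P/δ := div_nonneg (by linarith) hδ.le
    have h2 : (0:ℝ) ≤ ((M.T:ℝ)+1)*M.B := mul_nonneg (by positivity) hB.le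
    exact mul_nonneg (mul_nonneg hc1pos.le h1) h2
  -- convergence of the fluctuation term
  have hsq : Filter.Tendsto (fun m : ℕ => Real.sqrt m) Filter.atTop Filter.atTop := by
    refine Filter.tendsto_atTop.mpr fun b => ?_
    filter_upwards [Filter.eventually_ge_atTop (Nat.ceil (b^2))] with m hm
    have h1 : (b^2 : ℝ) ≤ m := le_trans (Nat.le_ceil _) (by exact_mod_cast hm)
    calc b ≤ |b| := le_abs_self b
      _ = Real.sqrt (b^2) := (Real.sqrt_sq_eq_abs b).symm
      _ ≤ Real.sqrt m := Real.sqrt_le_sqrt h1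
  have hinv : Filter.Tendsto (fun m : ℕ => (Real.sqrt m)⁻¹) Filter.atTop (nhds 0) :=
    hsq.inv_tendsto_atTop
  have hg : Filter.Tendsto (fun m : ℕ => (1 + Real.sqrt m)/((m:ℝ)+1))
      Filter.atTop (nhds 0) := by
    have h1 : Filter.Tendsto (fun m : ℕ => 1/((m:ℝ)+1)) Filter.atTop (nhds 0) :=
      tendsto_one_div_add_atTop_nhds_zero_nat
    have h2 : Filter.Tendsto (fun m : ℕ => Real.sqrt m/((m:ℝ)+1))
        Filter.atTop (nhds 0) := by
      refine squeeze_zero' ?_ ?_ hinv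
      · filter_upwards with m
        positivity
      · filter_upwards [Filter.eventually_ge_atTop 1] with m hm
        have hm1 : (1:ℝ) ≤ (m:ℝ) := by exact_mod_cast hm
        have hs : 0 < Real.sqrt m := Real.sqrt_pos.mpr (by linarith)
        have hss : Real.sqrt m * Real.sqrt m = (m:ℝ) := Real.mul_self_sqrt (by linarith)
        rw [div_le_iff₀ (by positivity : (0:ℝ) < (m:ℝ)+1)]
        have hinv2 : (Real.sqrt m)⁻¹ * Real.sqrt m = 1 := inv_mul_cancel₀ (ne_of_gt hs)
        have hexp : (Real.sqrt m)⁻¹ * ((m:ℝ)+1) = Real.sqrt m + (Real.sqrt m)⁻¹ := by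
          linear_combination (-(Real.sqrt m)⁻¹) * hss + Real.sqrt m * hinv2
        rw [hexp]
        linarith [inv_nonneg.mpr hs.le]
    have h3 := h1.add h2
    rw [add_zero] at h3
    refine Filter.Tendsto.congr (fun m => ?_) h3
    rw [← add_div]
  have hgc : Filter.Tendsto (fun n : ℕ => (1 + Real.sqrt ((n-1 : ℕ)))/(((n-1:ℕ):ℝ)+1))
      Filter.atTop (nhds 0) := hg.comp (Filter.tendsto_sub_atTop_nat 1)
  have hev2 : ∀ᶠ n in Filter.atTop,
      (1 + Real.sqrt ((n-1:ℕ)))/(((n-1:ℕ):ℝ)+1) ≤ ε₀/(2*(C3+1)) :=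
    hgc.eventually_le_const (div_pos hε₀ (by linarith))
  refine Filter.limsup_le_of_le hcb ?_
  filter_upwards [hev2] with n hn
  have hmain := M.Vn_diff_le hreg hP ν hDOE s0 x0 hεc hδ hmod (n-1) (κ n)
  have hrewrite : 2 * (3 * M.B * ((M.T:ℝ)+1))
      * (ε₀/(2*c1) + 2*P/δ
          * ((((M.T:ℝ))+1) * (M.B * (1 + Real.sqrt ((n-1:ℕ)))) / (((n-1:ℕ):ℝ)+1)))
      = c1 * (ε₀/(2*c1)) + C3 * ((1 + Real.sqrt ((n-1:ℕ)))/(((n-1:ℕ):ℝ)+1)) := by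
    rw [hC3, hc1]
    ring
  have hc1e : c1 * (ε₀/(2*c1)) = ε₀/2 := by
    field_simp
  have hC3b : C3 * ((1 + Real.sqrt ((n-1:ℕ)))/(((n-1:ℕ):ℝ)+1)) ≤ ε₀/2 := by
    calc C3 * ((1 + Real.sqrt ((n-1:ℕ)))/(((n-1:ℕ):ℝ)+1))
        ≤ C3 * (ε₀/(2*(C3+1))) := mul_le_mul_of_nonneg_left hn hC3nn
      _ ≤ ε₀/2 := by
          have h1 : C3 * (ε₀/(2*(C3+1))) = ε₀ * (C3/(C3+1)) / 2 := by
            field_simp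
          rw [h1]
          have h2 : C3/(C3+1) ≤ 1 := by
            rw [div_le_one (by linarith)]
            linarith
          have h3 : ε₀ * (C3/(C3+1)) ≤ ε₀ * 1 := mul_le_mul_of_nonneg_left h2 hε₀.le
          linarith
  calc M.Vn (n-1) (κ n) ν x0 s0 - M.Vn (n-1) ν.toHist ν x0 s0
      ≤ 2 * (3 * M.B * ((M.T:ℝ)+1))
        * (ε₀/(2*c1) + 2*P/δ
            * ((((M.T:ℝ))+1) * (M.B * (1 + Real.sqrt ((n-1:ℕ)))) / (((n-1:ℕ):ℝ)+1))) := hmain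
    _ = c1 * (ε₀/(2*c1)) + C3 * ((1 + Real.sqrt ((n-1:ℕ)))/(((n-1:ℕ):ℝ)+1)) := hrewrite
    _ ≤ ε₀/2 + ε₀/2 := by
        rw [hc1e]
        linarith [hC3b]
    _ = 0 + ε₀ := by ring
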